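/- arXiv:1509.08876 — 6 statements merged into one kernel-verified Lean document; each statement's English description precedes it below -/
import Mathlib

section
/- For every integer n ≥ 0, the expected online domination number of the path is given exactly by γ_o(P_n) = (n+1)/2 − (1/2) · Σ_{j=0}^{n} (n+1−j)·(−2)^j / j!. -/
/- The path graph `P n` on `Fin n`: vertex `v` represents the label `v + 1 ∈ {1, ..., n}`,
   and consecutive labels are adjacent. -/
def pathGraph (n : ℕ) : SimpleGraph (Fin n) where
  Adj i j := (i : ℕ) + 1 = j ∨ (j : ℕ) + 1 = i
  symm := ⟨fun i j h => h.symm⟩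
  loopless := ⟨by intro i h; omega⟩

/- The dominating set produced by the online domination algorithm on `G` when vertices are
   revealed in the order of the list `l`: a revealed vertex is added iff no neighbor is
   already in the set. -/
open Classical in
noncomputable def domList {V : Type*} [DecidableEq V] (G : SimpleGraph V) (l : List V) : Finset V :=
  l.foldl (fun D v => if ∃ w ∈ D, G.Adj w v then D else insert v D) ∅

/- `Γ(π)`: the dominating set produced on `P n` when vertices are revealed in the order
   `π 0, π 1, ..., π (n-1)`. -/
noncomputable def GammaSet (n : ℕ) (π : Equiv.Perm (Fin n)) : Finset (Fin n) :=
  domList (pathGraph n) (List.ofFn fun i => π i)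

/- `γ(π) = |Γ(π)|`. -/
noncomputable def gamma (n : ℕ) (π : Equiv.Perm (Fin n)) : ℕ := (GammaSet n π).card

/- `γ_o(P n)`: the expected size of the dominating set produced by the online algorithm on the
   path `P n`, for a uniformly random permutation. -/
noncomputable def gammaOPath (n : ℕ) : ℝ :=
  (∑ π : Equiv.Perm (Fin n), (gamma n π : ℝ)) / (Nat.factorial n)


def Gnat : SimpleGraph ℕ where
  Adj i j := i + 1 = j ∨ j + 1 = i
  symm := ⟨fun i j h => h.symm⟩
  loopless := ⟨by intro i h; omega⟩

lemma gnat_adj (a b : ℕ) : Gnat.Adj a b ↔ (a + 1 = b ∨ b + 1 = a) := Iff.rfl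

open Classical in
noncomputable def domFold {V : Type*} [DecidableEq V] (G : SimpleGraph V) (D : Finset V)
    (l : List V) : Finset V :=
  l.foldl (fun D v => if ∃ w ∈ D, G.Adj w v then D else insert v D) D

lemma domFold_nil {V : Type*} [DecidableEq V] (G : SimpleGraph V) (D : Finset V) :
    domFold G D [] = D := rfl

open Classical in
lemma domFold_cons {V : Type*} [DecidableEq V] (G : SimpleGraph V) (D : Finset V) (v : V)
    (l : List V) :
    domFold G D (v :: l) =
      domFold G (if ∃ w ∈ D, G.Adj w v then D else insert v D) l := rfl

lemma mem_domFold {V : Type*} [DecidableEq V] (G : SimpleGraph V) (l : List V) (D : Finset V)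
    (x : V) (hx : x ∈ domFold G D l) : x ∈ D ∨ x ∈ l := by
  induction l generalizing D with
  | nil => exact Or.inl hx
  | cons w t ih =>
    rw [domFold_cons] at hx
    rcases ih _ hx with h | h
    · by_cases hc : ∃ u ∈ D, G.Adj u w
      · rw [if_pos hc] at h; exact Or.inl h
      · rw [if_neg hc] at h
        rcases Finset.mem_insert.mp h with rfl | h
        · exact Or.inr (List.mem_cons_self)
        · exact Or.inl h
    · exact Or.inr (List.mem_cons_of_mem _ h)

lemma domFold_map {V W : Type*} [DecidableEq V] [DecidableEq W] (G : SimpleGraph V)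
    (H : SimpleGraph W) (f : V → W) (hf : Function.Injective f)
    (hadj : ∀ a b, H.Adj (f a) (f b) ↔ G.Adj a b) :
    ∀ (l : List V) (D : Finset V),
      domFold H (D.image f) (l.map f) = (domFold G D l).image f := by
  intro l
  induction l with
  | nil => intro D; simp [domFold_nil]
  | cons v t ih =>
    intro D
    rw [List.map_cons, domFold_cons, domFold_cons]
    have hcond : (∃ w ∈ D.image f, H.Adj w (f v)) ↔ ∃ u ∈ D, G.Adj u v := by
      constructor
      · rintro ⟨w, hw, hadjw⟩
        rcases Finset.mem_image.mp hw with ⟨u, hu, rfl⟩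
        exact ⟨u, hu, (hadj u v).mp hadjw⟩
      · rintro ⟨u, hu, h⟩
        exact ⟨f u, Finset.mem_image_of_mem f hu, (hadj u v).mpr h⟩
    by_cases hc : ∃ u ∈ D, G.Adj u v
    · rw [if_pos (hcond.mpr hc), if_pos hc]; exact ih D
    · rw [if_neg (fun h => hc (hcond.mp h)), if_neg hc, ← Finset.image_insert]
      exact ih _

lemma domFold_split (v : ℕ) :
    ∀ (l : List ℕ) (D₁ D₂ : Finset ℕ), (∀ x ∈ D₁, x + 1 < v) → (∀ x ∈ D₂, v + 1 < x) →
      domFold Gnat (insert v (D₁ ∪ D₂)) l =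
        insert v (domFold Gnat D₁ (l.filter (fun w => w + 1 < v)) ∪
          domFold Gnat D₂ (l.filter (fun w => v + 1 < w))) := by
  intro l
  induction l with
  | nil => intro D₁ D₂ h₁ h₂; simp [domFold_nil]
  | cons w t ih =>
    intro D₁ D₂ h₁ h₂
    rw [domFold_cons]
    rcases (by omega : w + 1 < v ∨ w + 1 = v ∨ w = v ∨ w = v + 1 ∨ v + 1 < w) with
      h | h | h | h | h
    · -- w on the left side
      have hC : (∃ u ∈ insert v (D₁ ∪ D₂), Gnat.Adj u w) ↔ ∃ u ∈ D₁, Gnat.Adj u w := by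
        constructor
        · rintro ⟨u, hu, hadj⟩
          rw [gnat_adj] at hadj
          rcases Finset.mem_insert.mp hu with rfl | hu
          · omega
          rcases Finset.mem_union.mp hu with hu | hu
          · exact ⟨u, hu, hadj⟩
          · have := h₂ u hu; omega
        · rintro ⟨u, hu, hadj⟩
          exact ⟨u, by simp [hu], hadj⟩
      rw [List.filter_cons_of_pos (by simpa using h),
        List.filter_cons_of_neg (by simp; omega)]
      by_cases hc : ∃ u ∈ D₁, Gnat.Adj u w
      · rw [if_pos (hC.mpr hc), ih D₁ D₂ h₁ h₂, domFold_cons, if_pos hc]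
      · rw [if_neg (fun hh => hc (hC.mp hh))]
        have hset : insert w (insert v (D₁ ∪ D₂)) = insert v ((insert w D₁) ∪ D₂) := by
          ext a; simp; tauto
        rw [hset, ih (insert w D₁) D₂ ?_ h₂, domFold_cons, if_neg hc]
        intro x hx
        rcases Finset.mem_insert.mp hx with rfl | hx
        · exact h
        · exact h₁ x hx
    · -- w = v - 1 : skipped
      have hC : ∃ u ∈ insert v (D₁ ∪ D₂), Gnat.Adj u w :=
        ⟨v, Finset.mem_insert_self _ _, (gnat_adj v w).mpr (Or.inr h)⟩
      rw [List.filter_cons_of_neg (by simp; omega), List.filter_cons_of_neg (by simp; omega),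
        if_pos hC]
      exact ih D₁ D₂ h₁ h₂
    · -- w = v : re-inserted harmlessly
      subst h
      have hC : ¬ ∃ u ∈ insert w (D₁ ∪ D₂), Gnat.Adj u w := by
        rintro ⟨u, hu, hadj⟩
        rw [gnat_adj] at hadj
        rcases Finset.mem_insert.mp hu with rfl | hu
        · omega
        rcases Finset.mem_union.mp hu with hu | hu
        · have := h₁ u hu; omega
        · have := h₂ u hu; omega
      rw [List.filter_cons_of_neg (by simp), List.filter_cons_of_neg (by simp),
        if_neg hC, Finset.insert_idem, ih D₁ D₂ h₁ h₂]
    · -- w = v + 1 : skipped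
      have hC : ∃ u ∈ insert v (D₁ ∪ D₂), Gnat.Adj u w :=
        ⟨v, Finset.mem_insert_self _ _, (gnat_adj v w).mpr (Or.inl h.symm)⟩
      rw [List.filter_cons_of_neg (by simp; omega), List.filter_cons_of_neg (by simp; omega),
        if_pos hC]
      exact ih D₁ D₂ h₁ h₂
    · -- w on the right side
      have hC : (∃ u ∈ insert v (D₁ ∪ D₂), Gnat.Adj u w) ↔ ∃ u ∈ D₂, Gnat.Adj u w := by
        constructor
        · rintro ⟨u, hu, hadj⟩
          rw [gnat_adj] at hadj
          rcases Finset.mem_insert.mp hu with rfl | hu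
          · omega
          rcases Finset.mem_union.mp hu with hu | hu
          · have := h₁ u hu; omega
          · exact ⟨u, hu, hadj⟩
        · rintro ⟨u, hu, hadj⟩
          exact ⟨u, by simp [hu], hadj⟩
      rw [List.filter_cons_of_neg (by simp; omega),
        List.filter_cons_of_pos (by simpa using h)]
      by_cases hc : ∃ u ∈ D₂, Gnat.Adj u w
      · rw [if_pos (hC.mpr hc), ih D₁ D₂ h₁ h₂, domFold_cons (D := D₂), if_pos hc]
      · rw [if_neg (fun hh => hc (hC.mp hh))]
        have hset : insert w (insert v (D₁ ∪ D₂)) = insert v (D₁ ∪ (insert w D₂)) := by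
          ext a; simp; tauto
        rw [hset, ih D₁ (insert w D₂) h₁ ?_, domFold_cons (D := D₂), if_neg hc]
        intro x hx
        rcases Finset.mem_insert.mp hx with rfl | hx
        · exact h
        · exact h₂ x hx


noncomputable def ords (s : Finset ℕ) : Finset (List ℕ) :=
  if h : s = ∅ then {[]}
  else s.attach.biUnion (fun x => (ords (s.erase x.1)).image (List.cons x.1))
  termination_by s.card
  decreasing_by exact Finset.card_erase_lt_of_mem x.2

lemma ords_empty : ords ∅ = {[]} := by rw [ords]; simp

lemma sum_ords_nonempty {M : Type*} [AddCommMonoid M] (s : Finset ℕ) (hs : s.Nonempty)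
    (F : List ℕ → M) :
    ∑ l ∈ ords s, F l = ∑ x ∈ s, ∑ t ∈ ords (s.erase x), F (x :: t) := by
  rw [ords, dif_neg hs.ne_empty, Finset.sum_biUnion]
  · rw [← Finset.sum_attach s (fun x => ∑ t ∈ ords (s.erase x), F (x :: t))]
    refine Finset.sum_congr rfl fun x _ => ?_
    rw [Finset.sum_image]
    intro a _ b _ hab
    exact (List.cons.injEq _ _ _ _ ▸ hab).2
  · intro x _ y _ hxy
    refine Finset.disjoint_left.mpr fun l hl hl' => ?_
    rcases Finset.mem_image.mp hl with ⟨t, _, rfl⟩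
    rcases Finset.mem_image.mp hl' with ⟨t', _, he⟩
    exact hxy (Subtype.ext ((List.cons.injEq _ _ _ _ ▸ he).1.symm))

lemma mem_ords (s : Finset ℕ) (l : List ℕ) :
    l ∈ ords s ↔ l.Nodup ∧ l.toFinset = s := by
  induction s using Finset.strongInduction generalizing l with
  | _ s ih =>
    by_cases hs : s = ∅
    · subst hs
      rw [ords_empty, Finset.mem_singleton]
      constructor
      · rintro rfl; exact ⟨List.nodup_nil, rfl⟩
      · rintro ⟨-, h⟩
        cases l with
        | nil => rfl
        | cons x t => simp at h
    · rw [ords, dif_neg hs]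
      simp only [Finset.mem_biUnion, Finset.mem_image, Finset.mem_attach, true_and,
        Subtype.exists]
      constructor
      · rintro ⟨x, hx, t, ht, rfl⟩
        obtain ⟨hnd, htf⟩ := (ih _ (Finset.erase_ssubset hx) t).mp ht
        refine ⟨List.nodup_cons.mpr ⟨?_, hnd⟩, ?_⟩
        · intro hmem
          have : x ∈ s.erase x := htf ▸ List.mem_toFinset.mpr hmem
          exact (Finset.notMem_erase x s) this
        · rw [List.toFinset_cons, htf, Finset.insert_erase hx]
      · rintro ⟨hnd, htf⟩
        cases l with
        | nil => exact absurd htf.symm (by simpa using hs)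
        | cons x t =>
          have hxt : x ∉ t := (List.nodup_cons.mp hnd).1
          have hx : x ∈ s := by rw [← htf]; simp
          refine ⟨x, hx, t, ?_, rfl⟩
          rw [ih _ (Finset.erase_ssubset hx) t]
          refine ⟨(List.nodup_cons.mp hnd).2, ?_⟩
          rw [← htf, List.toFinset_cons, Finset.erase_insert]
          simpa using hxt

lemma card_ords (s : Finset ℕ) : (ords s).card = s.card.factorial := by
  induction s using Finset.strongInduction with
  | _ s ih =>
    by_cases hs : s = ∅
    · subst hs; rw [ords_empty]; simp
    · obtain ⟨x₀, hx₀⟩ := Finset.nonempty_of_ne_empty hs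
      have hcard : 0 < s.card := Finset.card_pos.mpr ⟨x₀, hx₀⟩
      rw [Finset.card_eq_sum_ones, sum_ords_nonempty s ⟨x₀, hx₀⟩]
      have : ∀ x ∈ s, ∑ t ∈ ords (s.erase x), (1 : ℕ) = (s.card - 1).factorial := by
        intro x hx
        rw [← Finset.card_eq_sum_ones, ih _ (Finset.erase_ssubset hx),
          Finset.card_erase_of_mem hx]
      rw [Finset.sum_congr rfl this, Finset.sum_const, smul_eq_mul]
      rcases Nat.exists_eq_succ_of_ne_zero (Nat.pos_iff_ne_zero.mp hcard) with ⟨k, hk⟩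
      rw [hk]; simp [Nat.factorial_succ]

lemma list_toFinset_map (f : ℕ → ℕ) (l : List ℕ) :
    (l.map f).toFinset = l.toFinset.image f := by
  ext a; simp

lemma ords_image_add (s : Finset ℕ) (k : ℕ) :
    ords (s.image (· + k)) = (ords s).image (List.map (· + k)) := by
  ext l
  rw [mem_ords, Finset.mem_image]
  constructor
  · rintro ⟨hnd, htf⟩
    have hge : ∀ x ∈ l, k ≤ x := by
      intro x hx
      have : x ∈ s.image (· + k) := htf ▸ List.mem_toFinset.mpr hx
      rcases Finset.mem_image.mp this with ⟨y, -, rfl⟩; omega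
    refine ⟨l.map (· - k), ?_, ?_⟩
    · rw [mem_ords]
      constructor
      · refine List.Nodup.map_on ?_ hnd
        intro x hx y hy hxy
        have := hge x hx; have := hge y hy; omega
      · rw [list_toFinset_map, htf, Finset.image_image]
        ext a
        simp only [Finset.mem_image, Function.comp_apply]
        constructor
        · rintro ⟨b, hb, rfl⟩
          simpa [Nat.add_sub_cancel] using hb
        · intro ha; exact ⟨a, ha, by omega⟩
    · rw [List.map_map]
      have : ∀ x ∈ l, (x - k) + k = x := fun x hx => by have := hge x hx; omega
      calc l.map ((· + k) ∘ (· - k)) = l.map id := List.map_congr_left this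
        _ = l := List.map_id l
  · rintro ⟨t, ht, rfl⟩
    obtain ⟨hnd, htf⟩ := (mem_ords s t).mp ht
    refine ⟨List.Nodup.map (fun a b h => by omega) hnd, ?_⟩
    rw [list_toFinset_map, htf]

lemma sum_ords_shift {M : Type*} [AddCommMonoid M] (s : Finset ℕ) (k : ℕ) (F : List ℕ → M) :
    ∑ l ∈ ords (s.image (· + k)), F l = ∑ t ∈ ords s, F (t.map (· + k)) := by
  rw [ords_image_add, Finset.sum_image]
  intro a _ b _ hab
  exact List.map_injective_iff.mpr (fun x y h => by omega) hab

lemma sum_ords_filter (p : ℕ → Prop) [DecidablePred p] :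
    ∀ (s : Finset ℕ) (F : List ℕ → ℕ),
      ∑ l ∈ ords s, F (l.filter (fun x => decide (p x))) =
        (s.card - (s.filter p).card).factorial * ((s.card).choose (s.filter p).card) *
          ∑ t ∈ ords (s.filter p), F t := by
  intro s
  induction s using Finset.strongInduction with
  | _ s ih =>
    intro F
    by_cases hs : s = ∅
    · subst hs; simp [ords_empty]
    · have hsne : s.Nonempty := Finset.nonempty_of_ne_empty hs
      have hn1 : 1 ≤ s.card := Finset.card_pos.mpr hsne
      have hmn : (s.filter p).card ≤ s.card := Finset.card_filter_le s p
      rw [sum_ords_nonempty s hsne, ← Finset.sum_filter_add_sum_filter_not s p]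
      have hA : ∀ x ∈ s.filter p,
          ∑ t ∈ ords (s.erase x), F ((x :: t).filter (fun y => decide (p y))) =
            (s.card - (s.filter p).card).factorial *
              ((s.card - 1).choose ((s.filter p).card - 1)) *
              ∑ t ∈ ords ((s.filter p).erase x), F (x :: t) := by
        intro x hx
        have hpx : p x := (Finset.mem_filter.mp hx).2
        have hxs : x ∈ s := (Finset.mem_filter.mp hx).1
        have hm1 : 1 ≤ (s.filter p).card := Finset.card_pos.mpr ⟨x, hx⟩
        have hstep : ∀ t ∈ ords (s.erase x),
            F ((x :: t).filter (fun y => decide (p y))) =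
              (fun l => F (x :: l)) (t.filter (fun y => decide (p y))) := by
          intro t _
          rw [List.filter_cons_of_pos (by simpa using hpx)]
        rw [Finset.sum_congr rfl hstep,
          ih (s.erase x) (Finset.erase_ssubset hxs) (fun l => F (x :: l)),
          Finset.filter_erase, Finset.card_erase_of_mem hxs,
          Finset.card_erase_of_mem hx]
        have hco : s.card - 1 - ((s.filter p).card - 1) = s.card - (s.filter p).card := by
          omega
        rw [hco]
      have hB : ∀ x ∈ s.filter (fun y => ¬ p y),
          ∑ t ∈ ords (s.erase x), F ((x :: t).filter (fun y => decide (p y))) =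
            (s.card - 1 - (s.filter p).card).factorial *
              ((s.card - 1).choose ((s.filter p).card)) *
              ∑ t ∈ ords (s.filter p), F t := by
        intro x hx
        have hpx : ¬ p x := (Finset.mem_filter.mp hx).2
        have hxs : x ∈ s := (Finset.mem_filter.mp hx).1
        have hstep : ∀ t ∈ ords (s.erase x),
            F ((x :: t).filter (fun y => decide (p y))) =
              F (t.filter (fun y => decide (p y))) := by
          intro t _
          rw [List.filter_cons_of_neg (by simpa using hpx)]
        have hxT : x ∉ s.filter p := fun h => hpx (Finset.mem_filter.mp h).2
        rw [Finset.sum_congr rfl hstep, ih (s.erase x) (Finset.erase_ssubset hxs) F,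
          Finset.filter_erase, Finset.erase_eq_of_notMem hxT,
          Finset.card_erase_of_mem hxs]
      rw [Finset.sum_congr rfl hA, Finset.sum_congr rfl hB, Finset.sum_const,
        ← Finset.mul_sum]
      have hcard' : (s.filter (fun y => ¬ p y)).card = s.card - (s.filter p).card := by
        have := Finset.card_filter_add_card_filter_not (s := s) (p := p)
        omega
      rw [hcard', smul_eq_mul]
      rcases Nat.eq_zero_or_pos (s.filter p).card with hm0 | hmpos
      · have hT : s.filter p = ∅ := Finset.card_eq_zero.mp hm0
        rw [hT]
        simp only [Finset.card_empty, Finset.sum_empty, mul_zero, zero_add, Nat.sub_zero,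
          Nat.choose_zero_right, mul_one, ords_empty, Finset.sum_singleton]
        rw [← Nat.mul_assoc, Nat.mul_factorial_pred (by omega : s.card ≠ 0)]
      · have hTne : (s.filter p).Nonempty := Finset.card_pos.mp hmpos
        rw [← sum_ords_nonempty (s.filter p) hTne (fun l => F l)]
        set n := s.card
        set m := (s.filter p).card
        set S := ∑ l ∈ ords (s.filter p), F l
        have key : (n - m).factorial * ((n - 1).choose (m - 1)) +
            (n - m) * ((n - 1 - m).factorial * ((n - 1).choose m)) =
            (n - m).factorial * (n.choose m) := by
          obtain ⟨n', hn'⟩ := Nat.exists_eq_succ_of_ne_zero (by omega : n ≠ 0)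
          obtain ⟨m', hm'⟩ := Nat.exists_eq_succ_of_ne_zero (by omega : m ≠ 0)
          have hmn' : m' ≤ n' := by omega
          rw [hn', hm', Nat.succ_sub_succ, Nat.succ_sub_one, Nat.succ_sub_one,
            Nat.choose_succ_succ, Nat.mul_add]
          congr 1
          rcases lt_or_eq_of_le hmn' with hlt | heq
          · have hsub : n' - (m' + 1) = (n' - m') - 1 := by omega
            rw [hsub, ← Nat.mul_assoc, Nat.mul_factorial_pred (by omega : n' - m' ≠ 0)]
          · subst heq
            rw [Nat.choose_succ_self]
            simp
        have hgrp : (n - m) * ((n - 1 - m).factorial * ((n - 1).choose m) * S) =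
            ((n - m) * ((n - 1 - m).factorial * ((n - 1).choose m))) * S := by ring
        rw [hgrp, ← Nat.add_mul, key]

lemma domList_eq_domFold {V : Type*} [DecidableEq V] (G : SimpleGraph V) (l : List V) :
    domList G l = domFold G ∅ l := rfl

noncomputable def SN (n : ℕ) : ℕ :=
  ∑ l ∈ ords (Finset.range n), (domFold Gnat ∅ l).card

lemma SN_zero : SN 0 = 0 := by
  rw [SN]
  simp [ords_empty, domFold_nil]

lemma card_domFold_cons (v : ℕ) (l : List ℕ) :
    (domFold Gnat ∅ (v :: l)).card =
      1 + (domFold Gnat ∅ (l.filter (fun w => w + 1 < v))).card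
        + (domFold Gnat ∅ (l.filter (fun w => v + 1 < w))).card := by
  rw [domFold_cons, if_neg (by simp)]
  have h0 : (insert v ∅ : Finset ℕ) = insert v (∅ ∪ ∅) := by simp
  rw [h0, domFold_split v l ∅ ∅ (by simp) (by simp)]
  have hL : ∀ x ∈ domFold Gnat ∅ (l.filter (fun w => w + 1 < v)), x + 1 < v := by
    intro x hx
    rcases mem_domFold _ _ _ _ hx with h | h
    · simp at h
    · simpa using (List.mem_filter.mp h).2
  have hR : ∀ x ∈ domFold Gnat ∅ (l.filter (fun w => v + 1 < w)), v + 1 < x := by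
    intro x hx
    rcases mem_domFold _ _ _ _ hx with h | h
    · simp at h
    · simpa using (List.mem_filter.mp h).2
  have hdisj : Disjoint (domFold Gnat ∅ (l.filter (fun w => w + 1 < v)))
      (domFold Gnat ∅ (l.filter (fun w => v + 1 < w))) :=
    Finset.disjoint_left.mpr fun x hx hx' => by
      have := hL x hx; have := hR x hx'; omega
  have hv : v ∉ (domFold Gnat ∅ (l.filter (fun w => w + 1 < v)) ∪
      domFold Gnat ∅ (l.filter (fun w => v + 1 < w))) := by
    intro hv
    rcases Finset.mem_union.mp hv with h | h
    · have := hL v h; omega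
    · have := hR v h; omega
  rw [Finset.card_insert_of_notMem hv, Finset.card_union_of_disjoint hdisj]
  omega

lemma SN_rec (n : ℕ) (hn : 1 ≤ n) :
    SN n = n.factorial + ∑ v ∈ Finset.range n,
      ((n - 1 - (v - 1)).factorial * ((n - 1).choose (v - 1)) * SN (v - 1)
        + (n - 1 - (n - v - 2)).factorial * ((n - 1).choose (n - v - 2)) * SN (n - v - 2)) := by
  rw [SN, sum_ords_nonempty (Finset.range n) ⟨0, Finset.mem_range.mpr hn⟩]
  have hv : ∀ v ∈ Finset.range n,
      ∑ t ∈ ords ((Finset.range n).erase v), (domFold Gnat ∅ (v :: t)).card =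
        (n - 1).factorial +
          ((n - 1 - (v - 1)).factorial * ((n - 1).choose (v - 1)) * SN (v - 1)
            + (n - 1 - (n - v - 2)).factorial * ((n - 1).choose (n - v - 2)) * SN (n - v - 2)) := by
    intro v hv
    have hvn : v < n := Finset.mem_range.mp hv
    have hcards : ((Finset.range n).erase v).card = n - 1 := by
      rw [Finset.card_erase_of_mem (Finset.mem_range.mpr hvn), Finset.card_range]
    have h1 : ∀ t ∈ ords ((Finset.range n).erase v),
        (domFold Gnat ∅ (v :: t)).card =
          1 + (domFold Gnat ∅ (t.filter (fun w => w + 1 < v))).card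
            + (domFold Gnat ∅ (t.filter (fun w => v + 1 < w))).card :=
      fun t _ => card_domFold_cons v t
    rw [Finset.sum_congr rfl h1]
    have hTL : ((Finset.range n).erase v).filter (fun w => w + 1 < v) =
        Finset.range (v - 1) := by
      ext a
      simp only [Finset.mem_filter, Finset.mem_erase, Finset.mem_range]
      omega
    have hTR : ((Finset.range n).erase v).filter (fun w => v + 1 < w) =
        Finset.Ico (v + 2) n := by
      ext a
      simp only [Finset.mem_filter, Finset.mem_erase, Finset.mem_range, Finset.mem_Ico]
      omega
    have hIco : Finset.Ico (v + 2) n = (Finset.range (n - v - 2)).image (· + (v + 2)) := by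
      ext a
      simp only [Finset.mem_Ico, Finset.mem_image, Finset.mem_range]
      constructor
      · intro h; exact ⟨a - (v + 2), by omega, by omega⟩
      · rintro ⟨b, hb, rfl⟩; omega
    have hmap : ∀ t : List ℕ,
        (domFold Gnat ∅ (t.map (· + (v + 2)))).card = (domFold Gnat ∅ t).card := by
      intro t
      have hm := domFold_map Gnat Gnat (· + (v + 2)) (fun a b h => by simpa using h)
        (fun a b => by simp only [gnat_adj]; omega) t ∅
      rw [Finset.image_empty] at hm
      rw [hm, Finset.card_image_of_injective _ (fun a b h => by simpa using h)]
    have hLsum : ∑ t ∈ ords ((Finset.range n).erase v),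
        (domFold Gnat ∅ (t.filter (fun w => w + 1 < v))).card =
          (n - 1 - (v - 1)).factorial * ((n - 1).choose (v - 1)) * SN (v - 1) := by
      rw [sum_ords_filter (fun w => w + 1 < v) ((Finset.range n).erase v)
        (fun l => (domFold Gnat ∅ l).card), hTL, hcards, Finset.card_range, SN]
    have hRsum : ∑ t ∈ ords ((Finset.range n).erase v),
        (domFold Gnat ∅ (t.filter (fun w => v + 1 < w))).card =
          (n - 1 - (n - v - 2)).factorial * ((n - 1).choose (n - v - 2)) * SN (n - v - 2) := by
      have hc2 : ((Finset.range (n - v - 2)).image (· + (v + 2))).card = n - v - 2 := by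
        rw [Finset.card_image_of_injective _ (fun a b h => by simpa using h),
          Finset.card_range]
      rw [sum_ords_filter (fun w => v + 1 < w) ((Finset.range n).erase v)
        (fun l => (domFold Gnat ∅ l).card), hTR, hcards, hIco, hc2, sum_ords_shift, SN]
      congr 1
      exact Finset.sum_congr rfl fun t _ => hmap t
    rw [Finset.sum_add_distrib, Finset.sum_add_distrib, Finset.sum_const, smul_eq_mul,
      mul_one, card_ords, hcards, hLsum, hRsum, add_assoc]
  rw [Finset.sum_congr rfl hv, Finset.sum_add_distrib, Finset.sum_const, Finset.card_range,
    smul_eq_mul, Nat.mul_factorial_pred (by omega)]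

set_option maxHeartbeats 1000000 in
lemma perm_sum (n : ℕ) : ∑ π : Equiv.Perm (Fin n), gamma n π = SN n := by
  have hg : ∀ π : Equiv.Perm (Fin n),
      gamma n π = (domFold Gnat ∅ ((List.ofFn fun i => π i).map Fin.val)).card := by
    intro π
    rw [gamma, GammaSet, domList_eq_domFold]
    have hm := domFold_map (pathGraph n) Gnat Fin.val Fin.val_injective
      (fun a b => Iff.rfl) (List.ofFn fun i => π i) ∅
    rw [Finset.image_empty] at hm
    rw [hm, Finset.card_image_of_injective _ Fin.val_injective]
  set i : Equiv.Perm (Fin n) → List ℕ := fun π => (List.ofFn fun j => π j).map Fin.val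
    with hi
  have hinj : Function.Injective i := by
    intro π π' h
    simp only [hi] at h
    have h2 := List.map_injective_iff.mpr Fin.val_injective h
    have h3 : (fun j => π j) = (fun j => π' j) := List.ofFn_injective h2
    exact Equiv.coe_fn_injective h3
  have hmem : ∀ π : Equiv.Perm (Fin n), i π ∈ ords (Finset.range n) := by
    intro π
    rw [mem_ords]
    constructor
    · exact (List.nodup_ofFn.mpr π.injective).map Fin.val_injective
    · ext x
      simp only [hi, List.mem_toFinset, List.mem_map, List.mem_ofFn, Finset.mem_range]
      constructor
      · rintro ⟨a, ⟨j, rfl⟩, rfl⟩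
        exact (π j).isLt
      · intro hx
        exact ⟨⟨x, hx⟩, ⟨π.symm ⟨x, hx⟩, by simp⟩, rfl⟩
  have himg : Finset.univ.image i = ords (Finset.range n) := by
    apply Finset.eq_of_subset_of_card_le
    · intro l hl
      rcases Finset.mem_image.mp hl with ⟨π, -, rfl⟩
      exact hmem π
    · rw [card_ords, Finset.card_range, Finset.card_image_of_injective _ hinj,
        Finset.card_univ, Fintype.card_perm, Fintype.card_fin]
  calc ∑ π : Equiv.Perm (Fin n), gamma n π
      = ∑ π : Equiv.Perm (Fin n), (domFold Gnat ∅ (i π)).card :=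
        Finset.sum_congr rfl (fun π _ => hg π)
    _ = ∑ l ∈ Finset.univ.image i, (domFold Gnat ∅ l).card :=
        (Finset.sum_image (f := fun l => (domFold Gnat ∅ l).card) (g := i)
          (s := Finset.univ) (fun a _ b _ h => hinj h)).symm
    _ = SN n := by rw [himg, SN]

noncomputable def EE (n : ℕ) : ℝ := (SN n : ℝ) / (Nat.factorial n)

lemma gammaOPath_eq_EE (n : ℕ) : gammaOPath n = EE n := by
  rw [gammaOPath, EE, ← perm_sum n, Nat.cast_sum]

lemma EE_zero : EE 0 = 0 := by rw [EE, SN_zero]; simp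

lemma coef_cast (k m : ℕ) (h : m ≤ k) :
    (((k - m).factorial * (k.choose m) : ℕ) : ℝ) =
      (k.factorial : ℝ) / (m.factorial : ℝ) := by
  have h2 : ((k.choose m : ℝ)) * (m.factorial : ℝ) * ((k - m).factorial : ℝ)
      = (k.factorial : ℝ) := by
    exact_mod_cast congrArg (Nat.cast (R := ℝ)) (Nat.choose_mul_factorial_mul_factorial h)
  have hm : (m.factorial : ℝ) ≠ 0 := Nat.cast_ne_zero.mpr (Nat.factorial_ne_zero m)
  push_cast
  field_simp
  linear_combination h2

lemma EE_rec (n : ℕ) (hn : 1 ≤ n) :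
    (n : ℝ) * EE n = n + 2 * ∑ m ∈ Finset.range (n - 1), EE m := by
  have h := SN_rec n hn
  have hc : (SN n : ℝ) = (n.factorial : ℝ) + ∑ v ∈ Finset.range n,
      ((((n - 1 - (v - 1)).factorial * ((n - 1).choose (v - 1)) : ℕ) : ℝ) * (SN (v - 1) : ℝ)
        + (((n - 1 - (n - v - 2)).factorial * ((n - 1).choose (n - v - 2)) : ℕ) : ℝ) *
          (SN (n - v - 2) : ℝ)) := by
    rw [h]; push_cast; ring
  have hterm : ∀ v ∈ Finset.range n,
      ((((n - 1 - (v - 1)).factorial * ((n - 1).choose (v - 1)) : ℕ) : ℝ) * (SN (v - 1) : ℝ)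
        + (((n - 1 - (n - v - 2)).factorial * ((n - 1).choose (n - v - 2)) : ℕ) : ℝ) *
          (SN (n - v - 2) : ℝ))
        = ((n - 1).factorial : ℝ) * EE (v - 1) + ((n - 1).factorial : ℝ) * EE (n - v - 2) := by
    intro v hv
    have hvn : v < n := Finset.mem_range.mp hv
    rw [coef_cast (n - 1) (v - 1) (by omega), coef_cast (n - 1) (n - v - 2) (by omega),
      EE, EE]
    have h1 : ((v - 1).factorial : ℝ) ≠ 0 := Nat.cast_ne_zero.mpr (Nat.factorial_ne_zero _)
    have h2 : ((n - v - 2).factorial : ℝ) ≠ 0 := Nat.cast_ne_zero.mpr (Nat.factorial_ne_zero _)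
    field_simp
  rw [Finset.sum_congr rfl hterm] at hc
  have hs1 : ∑ v ∈ Finset.range n, EE (v - 1) = ∑ m ∈ Finset.range (n - 1), EE m := by
    obtain ⟨k, rfl⟩ : ∃ k, n = k + 1 := ⟨n - 1, by omega⟩
    rw [Finset.sum_range_succ' (fun v => EE (v - 1)) k]
    simp only [Nat.add_sub_cancel, Nat.zero_sub, EE_zero, add_zero]
  have hs2 : ∑ v ∈ Finset.range n, EE (n - v - 2) = ∑ v ∈ Finset.range n, EE (v - 1) := by
    calc ∑ v ∈ Finset.range n, EE (n - v - 2)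
        = ∑ v ∈ Finset.range n, EE (n - 1 - v - 1) :=
          Finset.sum_congr rfl fun v hv => by congr 1; omega
      _ = ∑ v ∈ Finset.range n, EE (v - 1) :=
          Finset.sum_range_reflect (fun v => EE (v - 1)) n
  have hSNr : (SN n : ℝ) = (n.factorial : ℝ)
      + ((n - 1).factorial : ℝ) * (2 * ∑ m ∈ Finset.range (n - 1), EE m) := by
    rw [hc, Finset.sum_add_distrib, ← Finset.mul_sum, ← Finset.mul_sum, hs2, hs1]
    ring
  have hfac : (n.factorial : ℝ) = (n : ℝ) * ((n - 1).factorial : ℝ) := by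
    exact_mod_cast congrArg (Nat.cast (R := ℝ)) (Nat.mul_factorial_pred (by omega)).symm
  have hn0 : (n : ℝ) ≠ 0 := Nat.cast_ne_zero.mpr (by omega)
  have hf0 : (((n - 1).factorial : ℕ) : ℝ) ≠ 0 := Nat.cast_ne_zero.mpr (Nat.factorial_ne_zero _)
  rw [EE, hSNr, hfac]
  field_simp

noncomputable def U (j : ℕ) : ℝ := (-2 : ℝ) ^ j / (Nat.factorial j)

noncomputable def T (m : ℕ) : ℝ := ∑ j ∈ Finset.range (m + 1), U j

noncomputable def Fn (n : ℕ) : ℝ :=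
  ((n : ℝ) + 1) / 2 -
    (1 / 2) * ∑ j ∈ Finset.range (n + 1),
      ((n : ℝ) + 1 - (j : ℝ)) * (-2 : ℝ) ^ j / (Nat.factorial j)

lemma U_step (n : ℕ) : ((n : ℝ) + 1) * U (n + 1) = -2 * U n := by
  rw [U, U, pow_succ, Nat.factorial_succ]
  have h1 : (Nat.factorial n : ℝ) ≠ 0 := Nat.cast_ne_zero.mpr (Nat.factorial_ne_zero n)
  have h2 : ((n : ℝ) + 1) ≠ 0 := by positivity
  field_simp
  push_cast
  ring

lemma L1 (n : ℕ) : ∑ j ∈ Finset.range (n + 1), ((j : ℝ) + 2) * U j = 2 * U n := by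
  induction n with
  | zero =>
    rw [Finset.sum_range_one]
    norm_num [U]
  | succ k ih =>
    rw [Finset.sum_range_succ, ih]
    have := U_step k
    push_cast
    linarith

lemma Fn_key (n : ℕ) : Fn n = ((n : ℝ) + 1) * (1 - T (n + 1)) / 2 + (1 - T n) - 1 := by
  have hT1 : T (n + 1) = T n + U (n + 1) := by rw [T, T, Finset.sum_range_succ]
  have hsum : (∑ j ∈ Finset.range (n + 1), ((n : ℝ) + 1 - j) * (-2 : ℝ) ^ j / (Nat.factorial j))
      + (∑ j ∈ Finset.range (n + 1), ((j : ℝ) + 2) * U j) = ((n : ℝ) + 3) * T n := by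
    rw [T, Finset.mul_sum, ← Finset.sum_add_distrib]
    refine Finset.sum_congr rfl fun j _ => ?_
    rw [U]; ring
  have l1 := L1 n
  have l0 := U_step n
  have hK : (∑ j ∈ Finset.range (n + 1), ((n : ℝ) + 1 - j) * (-2 : ℝ) ^ j / (Nat.factorial j))
      = ((n : ℝ) + 1) * T (n + 1) + 2 * T n := by
    rw [hT1]
    linear_combination hsum - l1 - l0
  rw [Fn, hK]
  ring

lemma Fn_diff (n : ℕ) : Fn (n + 1) = Fn n + 1 / 2 - T (n + 1) / 2 := by
  rw [Fn, Fn, T]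
  push_cast
  rw [Finset.sum_range_succ
    (f := fun j => ((n : ℝ) + 1 + 1 - j) * (-2 : ℝ) ^ j / (Nat.factorial j)),
    Finset.sum_range_succ (f := U)]
  have hsplit : ∀ j ∈ Finset.range (n + 1),
      ((n : ℝ) + 1 + 1 - j) * (-2 : ℝ) ^ j / (Nat.factorial j) =
        ((n : ℝ) + 1 - j) * (-2 : ℝ) ^ j / (Nat.factorial j) + U j := by
    intro j _; rw [U]; ring
  rw [Finset.sum_congr rfl hsplit, Finset.sum_add_distrib]
  simp only [U]
  push_cast
  ring

lemma Fn_one : Fn 1 = 1 := by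
  rw [Fn, show (1 : ℕ) + 1 = 2 from rfl, Finset.sum_range_succ, Finset.sum_range_one]
  norm_num [Nat.factorial]

lemma Fn_rec (n : ℕ) :
    ((n : ℝ) + 1) * Fn (n + 1) = ((n : ℝ) + 1) + 2 * ∑ m ∈ Finset.range n, Fn m := by
  induction n with
  | zero => simp [Fn_one]
  | succ k ih =>
    rw [Finset.sum_range_succ]
    have e1 := Fn_diff (k + 1)
    have e2 := Fn_diff k
    have e3 := Fn_key k
    have e4 := U_step (k + 1)
    have e5 : T (k + 1 + 1) = T (k + 1) + U (k + 1 + 1) := by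
      rw [T, T, Finset.sum_range_succ]
    have e6 : T (k + 1) = T k + U (k + 1) := by rw [T, T, Finset.sum_range_succ]
    push_cast at *
    linear_combination ih + ((k : ℝ) + 2) * e1 + e2 - e3 - (((k : ℝ) + 2) / 2) * e5
      - (1 / 2) * e4 - e6

lemma main_eq (n : ℕ) : gammaOPath n = Fn n := by
  induction n using Nat.strong_induction_on with
  | _ n ih =>
    match n with
    | 0 =>
      have h0 : gammaOPath 0 = 0 := by
        rw [gammaOPath_eq_EE, EE, SN_zero]; simp
      rw [h0, Fn, Finset.sum_range_one]
      norm_num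
    | (k + 1) =>
      have hrec := EE_rec (k + 1) (Nat.le_add_left 1 k)
      have hgE : ∀ m, gammaOPath m = EE m := gammaOPath_eq_EE
      have hsum : ∑ m ∈ Finset.range k, EE m = ∑ m ∈ Finset.range k, Fn m := by
        refine Finset.sum_congr rfl fun m hm => ?_
        rw [← hgE m, ih m (by simpa using Nat.lt_succ_of_lt (Finset.mem_range.mp hm))]
      have hk : ((k + 1 : ℕ) : ℝ) ≠ 0 := by positivity
      have h1 : ((k + 1 : ℕ) : ℝ) * gammaOPath (k + 1) =
          ((k + 1 : ℕ) : ℝ) * Fn (k + 1) := by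
        rw [hgE, hrec]
        have h2 := Fn_rec k
        push_cast
        push_cast at h2
        simp only [Nat.add_sub_cancel] at *
        rw [hsum]
        linarith
      exact mul_left_cancel₀ hk h1

theorem expected_online_domination_closed_form (n : ℕ) :
    gammaOPath n = ((n : ℝ) + 1) / 2 -
      (1 / 2) * ∑ j ∈ Finset.range (n + 1),
        ((n : ℝ) + 1 - (j : ℝ)) * (-2 : ℝ) ^ j / (Nat.factorial j) := by
  exact main_eq n
end

section
/- For every integer n ≥ 3, the expected online domination number of the cycle graph C_n on n vertices satisfies γ_o(C_n) = 1 + γ_o(P_{n−3}). -/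
/- `γ_o(G)`: the expected size of the dominating set produced by the online domination
   algorithm on `G`, when the vertices are revealed in a uniformly random order. -/
noncomputable def gammaO {V : Type*} [Fintype V] [DecidableEq V] (G : SimpleGraph V) : ℝ :=
  (∑ e : Fin (Fintype.card V) ≃ V, ((domList G (List.ofFn fun i => e i)).card : ℝ)) /
    Nat.factorial (Fintype.card V)

/- The cycle graph `C n` on `Fin n`. -/
def cycleGraph (n : ℕ) : SimpleGraph (Fin n) where
  Adj i j := i ≠ j ∧ (((i : ℕ) + 1) % n = j ∨ ((j : ℕ) + 1) % n = i)
  symm := ⟨fun i j h => ⟨h.1.symm, h.2.symm⟩⟩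
  loopless := ⟨fun i h => h.1 rfl⟩

namespace GammaOCycleProof

open Finset

open Classical in
noncomputable def stepD {V : Type*} [DecidableEq V] (G : SimpleGraph V) (D : Finset V) (v : V) :
    Finset V :=
  if ∃ w ∈ D, G.Adj w v then D else insert v D

lemma domList_eq_foldl {V : Type*} [DecidableEq V] (G : SimpleGraph V) (l : List V) :
    domList G l = l.foldl (stepD G) ∅ := rfl

open Classical in
lemma stepD_pos {V : Type*} [DecidableEq V] {G : SimpleGraph V} {D : Finset V} {v : V}
    (h : ∃ w ∈ D, G.Adj w v) : stepD G D v = D := by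
  unfold stepD; rw [if_pos h]

open Classical in
lemma stepD_neg {V : Type*} [DecidableEq V] {G : SimpleGraph V} {D : Finset V} {v : V}
    (h : ¬ ∃ w ∈ D, G.Adj w v) : stepD G D v = insert v D := by
  unfold stepD; rw [if_neg h]

lemma foldl_map_iso {V : Type*} [DecidableEq V] {G : SimpleGraph V} (φ : G ≃g G)
    (l : List V) (D : Finset V) :
    (l.map φ).foldl (stepD G) (D.image φ) = (l.foldl (stepD G) D).image φ := by
  induction l generalizing D with
  | nil => simp
  | cons v t ih =>
    simp only [List.map_cons, List.foldl_cons]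
    have hstep : stepD G (D.image φ) (φ v) = (stepD G D v).image φ := by
      by_cases h : ∃ w ∈ D, G.Adj w v
      · rw [stepD_pos h, stepD_pos ?_]
        obtain ⟨w, hw, ha⟩ := h
        exact ⟨φ w, Finset.mem_image_of_mem _ hw, φ.map_rel_iff.mpr ha⟩
      · rw [stepD_neg h, stepD_neg ?_, Finset.image_insert]
        rintro ⟨w', hw', ha⟩
        obtain ⟨w, hw, rfl⟩ := Finset.mem_image.mp hw'
        exact h ⟨w, hw, φ.map_rel_iff.mp ha⟩
    rw [hstep, ih]

lemma card_domList_map_iso {V : Type*} [DecidableEq V] {G : SimpleGraph V} (φ : G ≃g G)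
    (l : List V) : (domList G (l.map φ)).card = (domList G l).card := by
  rw [domList_eq_foldl, domList_eq_foldl]
  have h := foldl_map_iso φ l ∅
  rw [Finset.image_empty] at h
  rw [h]
  exact Finset.card_image_of_injective _ (RelIso.injective φ)

variable {N : ℕ}

lemma cycle_adj_iff (a b : Fin (N + 3)) :
    (cycleGraph (N + 3)).Adj a b ↔ a ≠ b ∧ (a + 1 = b ∨ b + 1 = a) := by
  have h1 : ((1 : Fin (N + 3)) : ℕ) = 1 := by
    show 1 % (N + 3) = 1
    exact Nat.mod_eq_of_lt (by omega)
  have key : ∀ x y : Fin (N + 3), x + 1 = y ↔ ((x : ℕ) + 1) % (N + 3) = (y : ℕ) := by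
    intro x y
    rw [Fin.ext_iff, Fin.val_add, h1]
  constructor
  · rintro ⟨hne, h | h⟩
    · exact ⟨hne, Or.inl ((key a b).mpr h)⟩
    · exact ⟨hne, Or.inr ((key b a).mpr h)⟩
  · rintro ⟨hne, h | h⟩
    · exact ⟨hne, Or.inl ((key a b).mp h)⟩
    · exact ⟨hne, Or.inr ((key b a).mp h)⟩

def rotIso (N : ℕ) (v : Fin (N + 3)) : cycleGraph (N + 3) ≃g cycleGraph (N + 3) where
  toEquiv := Equiv.addRight v
  map_rel_iff' := by
    intro a b
    simp only [Equiv.coe_addRight]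
    rw [cycle_adj_iff, cycle_adj_iff]
    have key : ∀ x y : Fin (N + 3), x + v + 1 = y + v ↔ x + 1 = y := by
      intro x y
      rw [add_right_comm]
      exact add_left_inj v
    rw [key, key]
    have hne : a + v = b + v ↔ a = b := add_left_inj v
    constructor
    · rintro ⟨h1, h2⟩; exact ⟨fun hh => h1 (by rw [hh]), h2⟩
    · rintro ⟨h1, h2⟩; exact ⟨fun hh => h1 (hne.mp hh), h2⟩

def iota (N : ℕ) (k : Fin N) : Fin (N + 3) := ⟨(k : ℕ) + 2, by omega⟩

def pr (N : ℕ) (v : Fin (N + 3)) : Option (Fin N) :=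
  if h : 2 ≤ (v : ℕ) ∧ (v : ℕ) ≤ N + 1 then some ⟨(v : ℕ) - 2, by omega⟩ else none

lemma iota_injective : Function.Injective (iota N) := by
  intro a b h
  have := congrArg Fin.val h
  simp only [iota] at this
  exact Fin.ext (by omega)

lemma pr_iota (k : Fin N) : pr N (iota N k) = some k := by
  have hk := k.isLt
  unfold pr iota
  rw [dif_pos (by simp)]
  simp

lemma pr_eq_some {v : Fin (N + 3)} {k : Fin N} (h : pr N v = some k) : v = iota N k := by
  unfold pr at h
  split at h
  · simp only [Option.some.injEq] at h
    have := congrArg Fin.val h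
    simp only at this
    apply Fin.ext
    simp only [iota]
    omega
  · exact absurd h (by simp)

lemma pr_zero : pr N 0 = none := by
  unfold pr
  rw [dif_neg]
  simp

lemma adj_iota_iff (j k : Fin N) :
    (cycleGraph (N + 3)).Adj (iota N j) (iota N k) ↔ (pathGraph N).Adj j k := by
  have hj := j.isLt; have hk := k.isLt
  have e1 : (((iota N j : Fin (N + 3)) : ℕ) + 1) % (N + 3) = (j : ℕ) + 3 := by
    simp only [iota]; rw [Nat.mod_eq_of_lt (by omega)]
  have e2 : (((iota N k : Fin (N + 3)) : ℕ) + 1) % (N + 3) = (k : ℕ) + 3 := by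
    simp only [iota]; rw [Nat.mod_eq_of_lt (by omega)]
  show (_ ≠ _ ∧ (_ ∨ _)) ↔ (_ ∨ _)
  rw [e1, e2]
  constructor
  · rintro ⟨-, h | h⟩
    · left
      have : (j : ℕ) + 3 = (k : ℕ) + 2 := by simpa [iota] using h
      omega
    · right
      have : (k : ℕ) + 3 = (j : ℕ) + 2 := by simpa [iota] using h
      omega
  · intro h
    refine ⟨?_, ?_⟩
    · intro hv
      have := congrArg Fin.val hv
      simp only [iota] at this
      rcases h with h | h <;> omega
    · rcases h with h | h
      · left; show (j : ℕ) + 3 = ((iota N k : Fin (N + 3)) : ℕ); simp [iota]; omega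
      · right; show (k : ℕ) + 3 = ((iota N j : Fin (N + 3)) : ℕ); simp [iota]; omega

lemma not_adj_zero_iota (k : Fin N) : ¬ (cycleGraph (N + 3)).Adj 0 (iota N k) := by
  have hk := k.isLt
  rintro ⟨-, h | h⟩
  · have : ((0 : Fin (N + 3)) : ℕ) = 0 := rfl
    rw [this] at h
    have h1 : (1 : ℕ) % (N + 3) = 1 := Nat.mod_eq_of_lt (by omega)
    rw [h1] at h
    simp only [iota] at h
    omega
  · simp only [iota] at h
    rw [Nat.mod_eq_of_lt (by omega)] at h
    have : ((0 : Fin (N + 3)) : ℕ) = 0 := rfl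
    omega

lemma foldl_cycle (t : List (Fin (N + 3))) (D : Finset (Fin N)) :
    t.foldl (stepD (cycleGraph (N + 3))) (insert 0 (D.image (iota N))) =
      insert 0 (((t.filterMap (pr N)).foldl (stepD (pathGraph N)) D).image (iota N)) := by
  induction t generalizing D with
  | nil => simp
  | cons v t ih =>
    rw [List.foldl_cons]
    rcases hv : pr N v with _ | k
    · rw [List.filterMap_cons_none hv]
      have hval : (v : ℕ) = 0 ∨ (v : ℕ) = 1 ∨ (v : ℕ) = N + 2 := by
        have := v.isLt
        unfold pr at hv
        split at hv
        · exact absurd hv (by simp)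
        · omega
      have hs : stepD (cycleGraph (N + 3)) (insert 0 (D.image (iota N))) v
          = insert 0 (D.image (iota N)) := by
        rcases hval with h0 | h1 | h2
        · have hv0 : v = 0 := Fin.ext h0
          subst hv0
          unfold stepD
          split
          · rfl
          · rw [Finset.insert_idem]
        · apply stepD_pos
          refine ⟨0, Finset.mem_insert_self _ _, ?_, Or.inl ?_⟩
          · intro hh
            have := congrArg Fin.val hh
            simp only [Fin.val_zero] at this
            omega
          · show (((0 : Fin (N + 3)) : ℕ) + 1) % (N + 3) = (v : ℕ)
            simp only [Fin.val_zero]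
            rw [Nat.mod_eq_of_lt (by omega)]
            omega
        · apply stepD_pos
          refine ⟨0, Finset.mem_insert_self _ _, ?_, Or.inr ?_⟩
          · intro hh
            have := congrArg Fin.val hh
            simp only [Fin.val_zero] at this
            omega
          · show ((v : ℕ) + 1) % (N + 3) = ((0 : Fin (N + 3)) : ℕ)
            rw [h2]
            simp
      rw [hs, ih D]
    · have hvk : v = iota N k := pr_eq_some hv
      subst hvk
      rw [List.filterMap_cons_some hv, List.foldl_cons]
      have hcond : (∃ w ∈ insert 0 (D.image (iota N)), (cycleGraph (N + 3)).Adj w (iota N k)) ↔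
          ∃ j ∈ D, (pathGraph N).Adj j k := by
        constructor
        · rintro ⟨w, hw, ha⟩
          rcases Finset.mem_insert.mp hw with rfl | hw
          · exact absurd ha (not_adj_zero_iota k)
          · obtain ⟨j, hj, rfl⟩ := Finset.mem_image.mp hw
            exact ⟨j, hj, (adj_iota_iff j k).mp ha⟩
        · rintro ⟨j, hj, ha⟩
          exact ⟨iota N j, Finset.mem_insert_of_mem (Finset.mem_image_of_mem _ hj),
            (adj_iota_iff j k).mpr ha⟩
      by_cases hb : ∃ j ∈ D, (pathGraph N).Adj j k
      · rw [stepD_pos (hcond.mpr hb), stepD_pos hb, ih D]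
      · rw [stepD_neg (fun hh => hb (hcond.mp hh)), stepD_neg hb]
        rw [show insert (iota N k) (insert 0 (D.image (iota N)))
            = insert 0 ((insert k D).image (iota N)) by
          rw [Finset.image_insert, Finset.insert_comm]]
        exact ih _

lemma card_insert_iota (D : Finset (Fin N)) :
    (insert 0 (D.image (iota N))).card = D.card + 1 := by
  rw [Finset.card_insert_of_notMem, Finset.card_image_of_injective _ iota_injective]
  intro h
  obtain ⟨k, -, hk⟩ := Finset.mem_image.mp h
  have := congrArg Fin.val hk
  simp only [iota, Fin.val_zero] at this
  omega

section Count

variable {N : ℕ}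

def Tf (τ : Equiv.Perm (Fin N)) (v : Fin (N + 3)) : Fin (N + 3) :=
  match pr N v with
  | some k => iota N (τ k)
  | none => v

lemma Tf_eq_of_none {τ : Equiv.Perm (Fin N)} {v : Fin (N + 3)} (h : pr N v = none) :
    Tf τ v = v := by
  unfold Tf; rw [h]

lemma Tf_eq_of_some {τ : Equiv.Perm (Fin N)} {v : Fin (N + 3)} {k : Fin N}
    (h : pr N v = some k) : Tf τ v = iota N (τ k) := by
  unfold Tf; rw [h]

lemma pr_Tf (τ : Equiv.Perm (Fin N)) (v : Fin (N + 3)) :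
    pr N (Tf τ v) = (pr N v).map τ := by
  cases hv : pr N v with
  | none => rw [Tf_eq_of_none hv, hv]; rfl
  | some k => rw [Tf_eq_of_some hv, pr_iota]; rfl

lemma Tf_comp (τ' τ : Equiv.Perm (Fin N)) (v : Fin (N + 3)) :
    Tf τ' (Tf τ v) = Tf (τ' * τ) v := by
  cases hv : pr N v with
  | none => rw [Tf_eq_of_none hv, Tf_eq_of_none hv, Tf_eq_of_none hv]
  | some k =>
    rw [Tf_eq_of_some hv, Tf_eq_of_some (pr_iota (τ k)), Tf_eq_of_some hv]
    rfl

lemma Tf_one (v : Fin (N + 3)) : Tf (1 : Equiv.Perm (Fin N)) v = v := by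
  cases hv : pr N v with
  | none => exact Tf_eq_of_none hv
  | some k =>
    rw [Tf_eq_of_some hv]
    exact (pr_eq_some hv).symm

def Tperm (τ : Equiv.Perm (Fin N)) : Equiv.Perm (Fin (N + 3)) where
  toFun := Tf τ
  invFun := Tf τ⁻¹
  left_inv := fun v => by rw [Tf_comp, inv_mul_cancel, Tf_one]
  right_inv := fun v => by rw [Tf_comp, mul_inv_cancel, Tf_one]

lemma Tperm_zero (τ : Equiv.Perm (Fin N)) : Tperm τ 0 = 0 := by
  show Tf τ 0 = 0
  exact Tf_eq_of_none pr_zero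

noncomputable def Phi (e : Equiv.Perm (Fin (N + 3))) : List (Fin N) :=
  (List.ofFn ⇑e).filterMap (pr N)

lemma Phi_trans (e : Equiv.Perm (Fin (N + 3))) (τ : Equiv.Perm (Fin N)) :
    Phi (e.trans (Tperm τ)) = (Phi e).map τ := by
  unfold Phi
  have h1 : List.ofFn ⇑(e.trans (Tperm τ)) = (List.ofFn ⇑e).map (Tf τ) := by
    rw [List.map_ofFn]; rfl
  rw [h1, List.filterMap_map, List.map_filterMap]
  congr 1
  funext x
  exact pr_Tf τ x

lemma Phi_nodup (e : Equiv.Perm (Fin (N + 3))) : (Phi e).Nodup := by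
  apply List.Nodup.filterMap
  · intro a b c ha hb
    rw [pr_eq_some ha, pr_eq_some hb]
  · exact List.nodup_ofFn.mpr e.injective

lemma Phi_mem (e : Equiv.Perm (Fin (N + 3))) (k : Fin N) : k ∈ Phi e := by
  rw [Phi, List.mem_filterMap]
  refine ⟨iota N k, ?_, pr_iota k⟩
  rw [List.mem_ofFn]
  exact ⟨e.symm (iota N k), by simp⟩

lemma Phi_length (e : Equiv.Perm (Fin (N + 3))) : (Phi e).length = N := by
  rw [← List.toFinset_card_of_nodup (Phi_nodup e)]
  have h : (Phi e).toFinset = Finset.univ := by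
    ext k; simp [Phi_mem]
  rw [h, Finset.card_univ, Fintype.card_fin]

lemma ofFn_get_cast {α : Type*} (l : List α) (m : ℕ) (h : l.length = m) :
    List.ofFn (fun i : Fin m => l.get (Fin.cast h.symm i)) = l := by
  subst h
  exact List.ofFn_get l

noncomputable def permOf (e : Equiv.Perm (Fin (N + 3))) : Equiv.Perm (Fin N) :=
  Equiv.ofBijective (fun i => (Phi e).get (Fin.cast (Phi_length e).symm i))
    (Finite.injective_iff_bijective.mp (by
      intro a b hab
      have h := List.nodup_iff_injective_get.mp (Phi_nodup e) hab
      have h2 := congrArg Fin.val h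
      exact Fin.ext h2))

lemma ofFn_permOf (e : Equiv.Perm (Fin (N + 3))) : List.ofFn ⇑(permOf e) = Phi e :=
  ofFn_get_cast (Phi e) N (Phi_length e)

lemma permOf_eq_iff (e : Equiv.Perm (Fin (N + 3))) (σ : Equiv.Perm (Fin N)) :
    permOf e = σ ↔ Phi e = List.ofFn ⇑σ := by
  constructor
  · rintro rfl; exact (ofFn_permOf e).symm
  · intro h
    have h2 : List.ofFn ⇑(permOf e) = List.ofFn ⇑σ := by rw [ofFn_permOf, h]
    exact Equiv.coe_fn_injective (List.ofFn_inj.mp h2)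

noncomputable def E0 (N : ℕ) : Finset (Equiv.Perm (Fin (N + 3))) :=
  Finset.univ.filter (fun e => e 0 = 0)

lemma mem_fiber_iff {σ : Equiv.Perm (Fin N)} {e : Equiv.Perm (Fin (N + 3))} :
    e ∈ (E0 N).filter (fun e => permOf e = σ) ↔ e 0 = 0 ∧ Phi e = List.ofFn ⇑σ := by
  simp [E0, Finset.mem_filter, permOf_eq_iff]

lemma fiber_map {σ τ : Equiv.Perm (Fin N)} {e : Equiv.Perm (Fin (N + 3))}
    (he : e ∈ (E0 N).filter (fun e => permOf e = σ)) :
    e.trans (Tperm τ) ∈ (E0 N).filter (fun e => permOf e = τ * σ) := by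
  obtain ⟨h0, hΦ⟩ := mem_fiber_iff.mp he
  apply mem_fiber_iff.mpr
  constructor
  · show Tperm τ (e 0) = 0
    rw [h0, Tperm_zero]
  · rw [Phi_trans, hΦ, List.map_ofFn]
    rfl

lemma fiber_card (σ : Equiv.Perm (Fin N)) :
    ((E0 N).filter (fun e => permOf e = σ)).card
      = ((E0 N).filter (fun e => permOf e = 1)).card := by
  apply Finset.card_bij' (fun e _ => e.trans (Tperm σ⁻¹)) (fun e _ => e.trans (Tperm σ))
  · intro e _
    apply Equiv.ext
    intro v
    show Tf σ (Tf σ⁻¹ (e v)) = e v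
    rw [Tf_comp, mul_inv_cancel, Tf_one]
  · intro e _
    apply Equiv.ext
    intro v
    show Tf σ⁻¹ (Tf σ (e v)) = e v
    rw [Tf_comp, inv_mul_cancel, Tf_one]
  · intro e he
    have := fiber_map (τ := σ⁻¹) he
    rwa [inv_mul_cancel] at this
  · intro e he
    have := fiber_map (τ := σ) he
    rwa [mul_one] at this

lemma sum_E0 (F : List (Fin N) → ℝ) :
    ∑ e ∈ E0 N, F (Phi e) =
      (((E0 N).filter (fun e => permOf e = 1)).card : ℝ) *
        ∑ σ : Equiv.Perm (Fin N), F (List.ofFn ⇑σ) := by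
  rw [← Finset.sum_fiberwise (E0 N) permOf (fun e => F (Phi e)), Finset.mul_sum]
  apply Finset.sum_congr rfl
  intro σ _
  have hval : ∀ e ∈ (E0 N).filter (fun e => permOf e = σ), F (Phi e) = F (List.ofFn ⇑σ) := by
    intro e he
    rw [(mem_fiber_iff.mp he).2]
  rw [Finset.sum_congr rfl hval, Finset.sum_const, fiber_card σ, nsmul_eq_mul]

end Count

section Final

variable {N : ℕ}

lemma gammaO_eq_perm_sum {m : ℕ} (G : SimpleGraph (Fin m)) :
    gammaO G = (∑ σ : Equiv.Perm (Fin m), ((domList G (List.ofFn ⇑σ)).card : ℝ)) /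
      Nat.factorial m := by
  unfold gammaO
  rw [Fintype.card_fin]

lemma card_domList_cycle (e : Equiv.Perm (Fin (N + 3))) (he : e 0 = 0) :
    ((domList (cycleGraph (N + 3)) (List.ofFn ⇑e)).card : ℕ) =
      (domList (pathGraph N) (Phi e)).card + 1 := by
  rw [domList_eq_foldl, domList_eq_foldl]
  rw [show (List.ofFn ⇑e) = e 0 :: List.ofFn (fun i : Fin (N + 2) => e i.succ) from
    List.ofFn_succ (f := ⇑e)]
  rw [List.foldl_cons]
  have h0 : stepD (cycleGraph (N + 3)) ∅ (e 0)
      = insert (0 : Fin (N + 3)) (Finset.image (iota N) ∅) := by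
    rw [he, stepD_neg (by simp), Finset.image_empty]
  rw [h0, foldl_cycle, card_insert_iota]
  have hPhi : Phi e = List.filterMap (pr N) (List.ofFn fun i : Fin (N + 2) => e i.succ) := by
    rw [Phi, show (List.ofFn ⇑e) = e 0 :: List.ofFn (fun i : Fin (N + 2) => e i.succ) from
      List.ofFn_succ (f := ⇑e), List.filterMap_cons_none (by rw [he]; exact pr_zero)]
  rw [hPhi]

lemma card_domList_rot (e : Equiv.Perm (Fin (N + 3))) (v : Fin (N + 3)) :
    (domList (cycleGraph (N + 3)) (List.ofFn ⇑(e.trans (Equiv.addRight v)))).card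
      = (domList (cycleGraph (N + 3)) (List.ofFn ⇑e)).card := by
  rw [show List.ofFn ⇑(e.trans (Equiv.addRight v)) = (List.ofFn ⇑e).map ⇑(rotIso N v) from by
    rw [List.map_ofFn]; rfl]
  exact card_domList_map_iso _ _

lemma sum_filter_rot (v : Fin (N + 3)) :
    ∑ e ∈ Finset.univ.filter (fun e : Equiv.Perm (Fin (N + 3)) => e 0 = v),
        ((domList (cycleGraph (N + 3)) (List.ofFn ⇑e)).card : ℝ)
      = ∑ e ∈ E0 N, ((domList (cycleGraph (N + 3)) (List.ofFn ⇑e)).card : ℝ) := by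
  refine Finset.sum_bij' (fun e _ => e.trans (Equiv.addRight (-v)))
    (fun e _ => e.trans (Equiv.addRight v)) ?_ ?_ ?_ ?_ ?_
  · intro e he
    simp only [Finset.mem_filter, Finset.mem_univ, true_and] at he
    simp only [E0, Finset.mem_filter, Finset.mem_univ, true_and, Equiv.trans_apply,
      Equiv.coe_addRight, he]
    exact add_neg_cancel v
  · intro e he
    simp only [E0, Finset.mem_filter, Finset.mem_univ, true_and] at he
    simp only [Finset.mem_filter, Finset.mem_univ, true_and, Equiv.trans_apply,
      Equiv.coe_addRight, he]
    exact zero_add v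
  · intro e _
    apply Equiv.ext; intro x; simp
  · intro e _
    apply Equiv.ext; intro x; simp
  · intro e _
    show ((domList (cycleGraph (N + 3)) (List.ofFn ⇑e)).card : ℝ)
      = ((domList (cycleGraph (N + 3)) (List.ofFn ⇑(e.trans (Equiv.addRight (-v))))).card : ℝ)
    exact_mod_cast congrArg Nat.cast (card_domList_rot e (-v)).symm

lemma card_filter_rot (v : Fin (N + 3)) :
    (Finset.univ.filter (fun e : Equiv.Perm (Fin (N + 3)) => e 0 = v)).card = (E0 N).card := by
  refine Finset.card_bij' (fun e _ => e.trans (Equiv.addRight (-v)))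
    (fun e _ => e.trans (Equiv.addRight v)) ?_ ?_ ?_ ?_
  · intro e he
    simp only [Finset.mem_filter, Finset.mem_univ, true_and] at he
    simp only [E0, Finset.mem_filter, Finset.mem_univ, true_and, Equiv.trans_apply,
      Equiv.coe_addRight, he]
    exact add_neg_cancel v
  · intro e he
    simp only [E0, Finset.mem_filter, Finset.mem_univ, true_and] at he
    simp only [Finset.mem_filter, Finset.mem_univ, true_and, Equiv.trans_apply,
      Equiv.coe_addRight, he]
    exact zero_add v
  · intro e _
    apply Equiv.ext; intro x; simp
  · intro e _
    apply Equiv.ext; intro x; simp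

lemma gammaO_cycle_aux (N : ℕ) :
    gammaO (cycleGraph (N + 3)) = 1 + gammaO (pathGraph N) := by
  classical
  rw [gammaO_eq_perm_sum, gammaO_eq_perm_sum]
  set c : ℕ := ((E0 N).filter (fun e => permOf e = 1)).card with hc
  set SF : ℝ := ∑ σ : Equiv.Perm (Fin N), ((domList (pathGraph N) (List.ofFn ⇑σ)).card : ℝ)
    with hSF
  -- step 1: sum over E0
  have h1 : ∑ e ∈ E0 N, ((domList (cycleGraph (N + 3)) (List.ofFn ⇑e)).card : ℝ)
      = ((E0 N).card : ℝ) + c * SF := by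
    have hval : ∀ e ∈ E0 N, ((domList (cycleGraph (N + 3)) (List.ofFn ⇑e)).card : ℝ)
        = 1 + ((domList (pathGraph N) (Phi e)).card : ℝ) := by
      intro e he
      have h0 : e 0 = 0 := by simpa [E0] using he
      have := card_domList_cycle e h0
      push_cast [this]
      ring
    rw [Finset.sum_congr rfl hval, Finset.sum_add_distrib, Finset.sum_const, nsmul_eq_mul,
      mul_one]
    congr 1
    exact sum_E0 (fun l => ((domList (pathGraph N) l).card : ℝ))
  -- step 2: full sum via fibers over first value
  have h2 : (∑ e : Equiv.Perm (Fin (N + 3)),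
        ((domList (cycleGraph (N + 3)) (List.ofFn ⇑e)).card : ℝ))
      = (N + 3 : ℝ) * ∑ e ∈ E0 N, ((domList (cycleGraph (N + 3)) (List.ofFn ⇑e)).card : ℝ) := by
    rw [← Finset.sum_fiberwise Finset.univ (fun e : Equiv.Perm (Fin (N + 3)) => e 0)
      (fun e => ((domList (cycleGraph (N + 3)) (List.ofFn ⇑e)).card : ℝ))]
    rw [Finset.sum_congr rfl (fun v _ => sum_filter_rot v), Finset.sum_const,
      Finset.card_univ, Fintype.card_fin, nsmul_eq_mul]
    push_cast
    ring
  -- step 3: card E0 = c * N!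
  have h3 : ((E0 N).card : ℝ) = (c : ℝ) * Nat.factorial N := by
    have hh := sum_E0 (N := N) (fun _ => (1 : ℝ))
    simp only [Finset.sum_const, nsmul_eq_mul, mul_one, Finset.card_univ] at hh
    rw [hh, Fintype.card_perm, Fintype.card_fin]
  -- step 4: (N+3) * card E0 = (N+3)!
  have h4 : ((N : ℝ) + 3) * ((E0 N).card : ℝ) = Nat.factorial (N + 3) := by
    have hcard : Nat.factorial (N + 3) = (N + 3) * (E0 N).card := by
      have h := Finset.card_eq_sum_card_fiberwise
        (s := (Finset.univ : Finset (Equiv.Perm (Fin (N + 3))))) (t := Finset.univ)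
        (f := fun e => e 0) (fun e _ => Finset.mem_univ (e 0))
      rw [Finset.sum_congr rfl (fun v _ => card_filter_rot v), Finset.sum_const,
        smul_eq_mul] at h
      simpa [Fintype.card_perm] using h
    rw [hcard]
    push_cast
    ring
  -- positivity facts
  have hE0pos : 0 < ((E0 N).card : ℝ) := by
    have : (1 : Equiv.Perm (Fin (N + 3))) ∈ E0 N := by simp [E0]
    have hpos : 0 < (E0 N).card := Finset.card_pos.mpr ⟨1, this⟩
    exact_mod_cast hpos
  have hcpos : (0 : ℝ) < c := by
    by_contra hle
    push_neg at hle
    have : (c : ℝ) = 0 := le_antisymm hle (by positivity)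
    rw [this, zero_mul] at h3
    exact absurd h3 (ne_of_gt hE0pos)
  have hNfac : (0 : ℝ) < Nat.factorial N := by positivity
  -- final arithmetic
  rw [h2, h1]
  have hfac : (Nat.factorial (N + 3) : ℝ) = ((N : ℝ) + 3) * ((c : ℝ) * Nat.factorial N) := by
    rw [← h4, h3]
  rw [hfac, h3]
  field_simp

end Final

end GammaOCycleProof

theorem gammaO_cycle (n : ℕ) (hn : 3 ≤ n) :
    gammaO (cycleGraph n) = 1 + gammaO (pathGraph (n - 3)) := by
  obtain ⟨N, rfl⟩ : ∃ N, n = N + 3 := ⟨n - 3, by omega⟩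
  rw [Nat.add_sub_cancel]
  exact GammaOCycleProof.gammaO_cycle_aux N
end

section
/- For every integer n ≥ 3, the expected online domination number of the wheel graph with n spokes satisfies γ_o(H_n) = 1 + (n/(n+1)) · γ_o(P_{n−3}). -/
/- The wheel graph with `n` spokes: vertex `0` is the center, adjacent to every other vertex,
   and the vertices `1, ..., n` form a cycle. -/
def wheelGraph (n : ℕ) : SimpleGraph (Fin (n + 1)) where
  Adj i j := i ≠ j ∧ (i = 0 ∨ j = 0 ∨
    ((i : ℕ) % n + 1 = j ∨ (j : ℕ) % n + 1 = i))
  symm := by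
    constructor
    intro i j h
    exact ⟨h.1.symm, by tauto⟩
  loopless := ⟨fun i h => h.1 rfl⟩


open Classical in
noncomputable def domStep {V : Type*} [DecidableEq V] (G : SimpleGraph V) :
    Finset V → V → Finset V :=
  fun D v => if ∃ w ∈ D, G.Adj w v then D else insert v D

lemma domList_eq {V : Type*} [DecidableEq V] (G : SimpleGraph V) (l : List V) :
    domList G l = l.foldl (domStep G) ∅ := rfl

variable {V V' : Type*} [DecidableEq V] [DecidableEq V']

lemma domStep_pos {G : SimpleGraph V} {D : Finset V} {v : V}
    (h : ∃ w ∈ D, G.Adj w v) : domStep G D v = D := if_pos h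

lemma domStep_neg {G : SimpleGraph V} {D : Finset V} {v : V}
    (h : ¬ ∃ w ∈ D, G.Adj w v) : domStep G D v = insert v D := if_neg h

lemma foldl_domStep_subset (G : SimpleGraph V) :
    ∀ (l : List V) (D : Finset V), l.foldl (domStep G) D ⊆ D ∪ l.toFinset := by
  intro l
  induction l with
  | nil => intro D; simp
  | cons u l ih =>
    intro D
    refine (ih (domStep G D u)).trans ?_
    intro x hx
    simp only [Finset.mem_union, List.toFinset_cons, Finset.mem_insert] at hx ⊢
    by_cases h : ∃ w ∈ D, G.Adj w u
    · rw [domStep_pos h] at hx; tauto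
    · rw [domStep_neg h, Finset.mem_insert] at hx; tauto

/-- Key step lemma. -/
lemma foldl_domStep_cons (G : SimpleGraph V) (v : V) (P : V → Prop) [DecidablePred P]
    (hP : ∀ w, P w ↔ (¬ G.Adj v w ∧ w ≠ v)) (G' : SimpleGraph V)
    (hG' : ∀ x y, G'.Adj x y ↔ (P x ∧ P y ∧ G.Adj x y)) :
    ∀ (l : List V) (D : Finset V), (∀ x ∈ D, P x) →
      l.foldl (domStep G) (insert v D) =
        insert v ((l.filter P).foldl (domStep G') D) := by
  intro l
  induction l with
  | nil => intro D _; simp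
  | cons u l ih =>
    intro D hD
    simp only [List.foldl_cons, List.filter_cons, decide_eq_true_eq]
    by_cases hu : P u
    · rw [if_pos hu]
      have huv : ¬ G.Adj v u := ((hP u).1 hu).1
      by_cases h : ∃ w ∈ D, G.Adj w u
      · have h1 : ∃ w ∈ insert v D, G.Adj w u := by
          obtain ⟨w, hw, hadj⟩ := h
          exact ⟨w, Finset.mem_insert_of_mem hw, hadj⟩
        have h2 : ∃ w ∈ D, G'.Adj w u := by
          obtain ⟨w, hw, hadj⟩ := h
          exact ⟨w, hw, (hG' w u).2 ⟨hD w hw, hu, hadj⟩⟩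
        rw [List.foldl_cons, domStep_pos h1, domStep_pos h2, ih D hD]
      · have h1 : ¬ ∃ w ∈ insert v D, G.Adj w u := by
          rintro ⟨w, hw, hadj⟩
          rcases Finset.mem_insert.1 hw with rfl | hw
          · exact huv hadj
          · exact h ⟨w, hw, hadj⟩
        have h2 : ¬ ∃ w ∈ D, G'.Adj w u := by
          rintro ⟨w, hw, hadj⟩
          exact h ⟨w, hw, ((hG' w u).1 hadj).2.2⟩
        rw [List.foldl_cons, domStep_neg h1, domStep_neg h2,
          Finset.insert_comm, ih (insert u D) ?_]
        intro x hx
        rcases Finset.mem_insert.1 hx with rfl | hx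
        · exact hu
        · exact hD x hx
    · rw [if_neg hu]
      rcases not_and_or.1 ((hP u).not.1 hu) with hadj | hne
      · -- G.Adj v u
        have hadj' : G.Adj v u := Classical.not_not.1 hadj
        have h1 : ∃ w ∈ insert v D, G.Adj w u :=
          ⟨v, Finset.mem_insert_self v D, hadj'⟩
        rw [domStep_pos h1, ih D hD]
      · -- u = v
        have huv : u = v := Classical.not_not.1 hne
        subst huv
        have h1 : ¬ ∃ w ∈ insert u D, G.Adj w u := by
          rintro ⟨w, hw, hadj⟩
          rcases Finset.mem_insert.1 hw with rfl | hw
          · exact G.loopless.irrefl w hadj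
          · exact ((hP w).1 (hD w hw)).1 (hadj.symm)
        rw [domStep_neg h1, Finset.insert_idem, ih D hD]

lemma domList_cons (G : SimpleGraph V) (v : V) (P : V → Prop) [DecidablePred P]
    (hP : ∀ w, P w ↔ (¬ G.Adj v w ∧ w ≠ v)) (G' : SimpleGraph V)
    (hG' : ∀ x y, G'.Adj x y ↔ (P x ∧ P y ∧ G.Adj x y)) (l : List V) :
    domList G (v :: l) = insert v (domList G' (l.filter P)) := by
  rw [domList_eq, domList_eq, List.foldl_cons,
    domStep_neg (by rintro ⟨w, hw, -⟩; exact absurd hw (Finset.notMem_empty w))]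
  exact foldl_domStep_cons G v P hP G' hG' l ∅ (by simp)

lemma card_domList_cons (G : SimpleGraph V) (v : V) (P : V → Prop) [DecidablePred P]
    (hP : ∀ w, P w ↔ (¬ G.Adj v w ∧ w ≠ v)) (G' : SimpleGraph V)
    (hG' : ∀ x y, G'.Adj x y ↔ (P x ∧ P y ∧ G.Adj x y)) (l : List V) :
    (domList G (v :: l)).card = 1 + (domList G' (l.filter P)).card := by
  rw [domList_cons G v P hP G' hG' l, Finset.card_insert_of_notMem, add_comm]
  intro hv
  have := foldl_domStep_subset G' (l.filter P) ∅ (by rw [← domList_eq]; exact hv)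
  simp only [Finset.empty_union, List.mem_toFinset, List.mem_filter,
    decide_eq_true_eq] at this
  exact ((hP v).1 this.2).2 rfl

lemma foldl_domStep_map (G : SimpleGraph V) (G2 : SimpleGraph V') (φ : V → V')
    (hφ : ∀ x y, G.Adj x y ↔ G2.Adj (φ x) (φ y)) :
    ∀ (l : List V) (D : Finset V),
      (l.map φ).foldl (domStep G2) (D.image φ) = (l.foldl (domStep G) D).image φ := by
  intro l
  induction l with
  | nil => intro D; simp
  | cons u l ih =>
    intro D
    simp only [List.map_cons, List.foldl_cons]
    by_cases h : ∃ w ∈ D, G.Adj w u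
    · have h2 : ∃ w ∈ D.image φ, G2.Adj w (φ u) := by
        obtain ⟨w, hw, hadj⟩ := h
        exact ⟨φ w, Finset.mem_image_of_mem φ hw, (hφ w u).1 hadj⟩
      rw [domStep_pos h2, domStep_pos h, ih]
    · have h2 : ¬ ∃ w ∈ D.image φ, G2.Adj w (φ u) := by
        rintro ⟨w, hw, hadj⟩
        obtain ⟨x, hx, rfl⟩ := Finset.mem_image.1 hw
        exact h ⟨x, hx, (hφ x u).2 hadj⟩
      rw [domStep_neg h2, domStep_neg h, ← Finset.image_insert, ih]

lemma domList_map (G : SimpleGraph V) (G2 : SimpleGraph V') (φ : V → V')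
    (hφ : ∀ x y, G.Adj x y ↔ G2.Adj (φ x) (φ y)) (l : List V) :
    domList G2 (l.map φ) = (domList G l).image φ := by
  rw [domList_eq, domList_eq, ← Finset.image_empty φ]
  exact foldl_domStep_map G G2 φ hφ l ∅

lemma card_domList_map (G : SimpleGraph V) (G2 : SimpleGraph V') (φ : V → V')
    (hinj : Function.Injective φ)
    (hφ : ∀ x y, G.Adj x y ↔ G2.Adj (φ x) (φ y)) (l : List V) :
    (domList G2 (l.map φ)).card = (domList G l).card := by
  rw [domList_map G G2 φ hφ l, Finset.card_image_of_injective _ hinj]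

lemma card_domList_dominating (G : SimpleGraph V) (v : V)
    (hv : ∀ w, w ≠ v → G.Adj v w) (l : List V) :
    (domList G (v :: l)).card = 1 := by
  have := card_domList_cons G v (fun _ => False)
    (fun w => by
      constructor
      · exact fun h => h.elim
      · rintro ⟨h1, h2⟩; exact h1 (hv w h2))
    ⊥ (fun x y => by simp) l
  simpa [domList] using this


namespace Wheel

variable (n : ℕ)

def vC : Fin (n + 1) := ⟨n, Nat.lt_succ_self n⟩

def phi : Fin (n - 3) → Fin (n + 1) := fun i => ⟨i.1 + 2, by have := i.2; omega⟩

def psi : Fin (n + 1) → Option (Fin (n - 3)) := fun w =>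
  if h : 2 ≤ w.1 ∧ w.1 ≤ n - 2 then some ⟨w.1 - 2, by omega⟩ else none

def Gres : SimpleGraph (Fin (n + 1)) where
  Adj x y := (2 ≤ x.1 ∧ x.1 ≤ n - 2) ∧ (2 ≤ y.1 ∧ y.1 ≤ n - 2) ∧ (wheelGraph n).Adj x y
  symm := ⟨by rintro x y ⟨a, b, c⟩; exact ⟨b, a, c.symm⟩⟩
  loopless := ⟨fun x h => (wheelGraph n).loopless.irrefl x h.2.2⟩

lemma wheel_adj_iff (x y : Fin (n + 1)) :
    (wheelGraph n).Adj x y ↔ x.1 ≠ y.1 ∧ (x.1 = 0 ∨ y.1 = 0 ∨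
      (x.1 % n + 1 = y.1 ∨ y.1 % n + 1 = x.1)) := by
  constructor
  · rintro ⟨h1, h2⟩
    refine ⟨fun h => h1 (Fin.ext h), ?_⟩
    rcases h2 with h | h | h
    · exact Or.inl (by rw [h]; rfl)
    · exact Or.inr (Or.inl (by rw [h]; rfl))
    · exact Or.inr (Or.inr h)
  · rintro ⟨h1, h2⟩
    refine ⟨fun h => h1 (by rw [h]), ?_⟩
    rcases h2 with h | h | h
    · exact Or.inl (Fin.ext h)
    · exact Or.inr (Or.inl (Fin.ext h))
    · exact Or.inr (Or.inr h)

variable {n}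

lemma hP' (hn : 3 ≤ n) : ∀ w : Fin (n + 1),
    (2 ≤ w.1 ∧ w.1 ≤ n - 2) ↔ ¬ (wheelGraph n).Adj (vC n) w ∧ w ≠ vC n := by
  intro w
  rw [wheel_adj_iff]
  have hw : w.1 < n + 1 := w.2
  have hvC : (vC n).1 = n := rfl
  have hne : (w ≠ vC n) ↔ w.1 ≠ n := by
    constructor
    · intro h h'; exact h (Fin.ext (h'.trans hvC.symm))
    · intro h h'; exact h (by rw [h']; rfl)
  rw [hne, hvC, Nat.mod_self]
  rcases eq_or_ne w.1 n with h | h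
  · rw [h, Nat.mod_self]; omega
  · rw [Nat.mod_eq_of_lt (by omega)]; omega

lemma hPath (hn : 3 ≤ n) : ∀ i j : Fin (n - 3),
    (pathGraph (n - 3)).Adj i j ↔ (Gres n).Adj (phi n i) (phi n j) := by
  intro i j
  have hi := i.2
  have hj := j.2
  show _ ↔ _ ∧ _ ∧ (wheelGraph n).Adj _ _
  rw [wheel_adj_iff]
  show ((i : ℕ) + 1 = j ∨ (j : ℕ) + 1 = i) ↔ _
  have h1 : (phi n i).1 = i.1 + 2 := rfl
  have h2 : (phi n j).1 = j.1 + 2 := rfl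
  rw [h1, h2, Nat.mod_eq_of_lt (by omega), Nat.mod_eq_of_lt (by omega)]
  constructor
  · intro h; exact ⟨by omega, by omega, by omega, by omega⟩
  · rintro ⟨-, -, h⟩; omega

lemma phi_injective : Function.Injective (phi n) := by
  intro i j h
  have : i.1 + 2 = j.1 + 2 := congrArg Fin.val h
  exact Fin.ext (by omega)

lemma psi_phi (j : Fin (n - 3)) : psi n (phi n j) = some j := by
  have hj := j.2
  have hval : (phi n j).1 = j.1 + 2 := rfl
  rw [psi, dif_pos (by rw [hval]; omega : 2 ≤ (phi n j).1 ∧ (phi n j).1 ≤ n - 2)]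
  exact congrArg some (Fin.ext (by show (phi n j).1 - 2 = j.1; rw [hval]; omega))

lemma map_phi_filterMap_psi (l : List (Fin (n + 1))) :
    (l.filterMap (psi n)).map (phi n) = l.filter (fun w => decide (2 ≤ w.1 ∧ w.1 ≤ n - 2)) := by
  induction l with
  | nil => rfl
  | cons u l ih =>
    rw [List.filterMap_cons, List.filter_cons]
    by_cases h : 2 ≤ u.1 ∧ u.1 ≤ n - 2
    · rw [psi, dif_pos h, List.map_cons, ih, if_pos (by simpa using h)]
      congr 1
      exact Fin.ext (by show u.1 - 2 + 2 = u.1; omega)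
    · rw [psi, dif_neg h, ih, if_neg (by simpa using h)]
end Wheel

namespace Wheel

variable {n : ℕ}

/-- The tail of the reveal order. -/
def tl (n : ℕ) (e : Fin (n + 1) ≃ Fin (n + 1)) : List (Fin (n + 1)) :=
  List.ofFn (fun i : Fin n => e i.succ)

lemma ofFn_eq_cons (e : Fin (n + 1) ≃ Fin (n + 1)) :
    (List.ofFn fun i => e i) = e 0 :: tl n e := List.ofFn_succ

lemma card_center (e : Fin (n + 1) ≃ Fin (n + 1)) (h : e 0 = 0) :
    (domList (wheelGraph n) (List.ofFn fun i => e i)).card = 1 := by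
  rw [ofFn_eq_cons, h]
  apply card_domList_dominating
  intro w hw
  exact ⟨fun h' => hw h'.symm, Or.inl rfl⟩

/-- The induced reveal order on the path, as a list of `Fin (n-3)`. -/
def indList (n : ℕ) (e : Fin (n + 1) ≃ Fin (n + 1)) : List (Fin (n - 3)) :=
  (tl n e).filterMap (psi n)

lemma card_side (hn : 3 ≤ n) (e : Fin (n + 1) ≃ Fin (n + 1)) (h : e 0 = vC n) :
    (domList (wheelGraph n) (List.ofFn fun i => e i)).card =
      1 + (domList (pathGraph (n - 3)) (indList n e)).card := by
  rw [ofFn_eq_cons, h,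
    card_domList_cons (wheelGraph n) (vC n) (fun w => 2 ≤ w.1 ∧ w.1 ≤ n - 2)
      (hP' hn) (Gres n) (fun x y => Iff.rfl)]
  congr 1
  rw [show (tl n e).filter (fun w => decide (2 ≤ w.1 ∧ w.1 ≤ n - 2)) =
      (indList n e).map (phi n) from (map_phi_filterMap_psi _).symm]
  exact card_domList_map (pathGraph (n - 3)) (Gres n) (phi n) phi_injective (hPath hn) _

lemma nodup_indList (e : Fin (n + 1) ≃ Fin (n + 1)) : (indList n e).Nodup := by
  have htl : (tl n e).Nodup := by
    rw [tl, List.nodup_ofFn]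
    exact e.injective.comp (Fin.succ_injective n)
  refine htl.filterMap ?_
  intro a a' b hb hb'
  rw [psi] at hb hb'
  split at hb
  · split at hb'
    · simp only [Option.mem_def, Option.some.injEq] at hb hb'
      have h1 : a.1 - 2 = b.1 := congrArg Fin.val hb
      have h2 : a'.1 - 2 = b.1 := congrArg Fin.val hb'
      exact Fin.ext (by omega)
    · exact absurd hb' (by simp)
  · exact absurd hb (by simp)

lemma length_indList (hn : 3 ≤ n) (e : Fin (n + 1) ≃ Fin (n + 1)) (h : e 0 = vC n) :
    (indList n e).length = n - 3 := by
  have hnodup := nodup_indList e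
  have htf : (indList n e).toFinset = Finset.univ := by
    apply Finset.eq_univ_of_forall
    intro j
    rw [List.mem_toFinset, indList, List.mem_filterMap]
    refine ⟨phi n j, ?_, psi_phi j⟩
    rw [tl, List.mem_ofFn]
    have hne : e.symm (phi n j) ≠ 0 := by
      intro h0
      have : phi n j = e 0 := by rw [← h0, Equiv.apply_symm_apply]
      rw [h] at this
      have hval : (phi n j).1 = (vC n).1 := by rw [this]
      have hj := j.2
      have : j.1 + 2 = n := hval
      omega
    refine ⟨(e.symm (phi n j)).pred hne, ?_⟩
    show e ((e.symm (phi n j)).pred hne).succ = phi n j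
    rw [Fin.succ_pred, Equiv.apply_symm_apply]
  have := List.toFinset_card_of_nodup hnodup
  rw [htf] at this
  simpa using this.symm

end Wheel

namespace Wheel

variable {n : ℕ}

lemma ofFn_get_cast {α : Type*} {m : ℕ} (L : List α) (h : L.length = m) :
    List.ofFn (fun i : Fin m => L.get (Fin.cast h.symm i)) = L := by
  subst h
  exact List.ofFn_get L

open Classical in
/-- The induced permutation of the path vertices. -/
noncomputable def tau (n : ℕ) (e : Fin (n + 1) ≃ Fin (n + 1)) : Fin (n - 3) ≃ Fin (n - 3) :=
  if h : (indList n e).length = n - 3 then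
    Equiv.ofBijective (fun i => (indList n e).get (Fin.cast h.symm i))
      (Finite.injective_iff_bijective.1
        ((List.nodup_iff_injective_get.1 (nodup_indList e)).comp (Fin.cast_injective _)))
  else Equiv.refl _

lemma ofFn_tau (hn : 3 ≤ n) (e : Fin (n + 1) ≃ Fin (n + 1)) (h : e 0 = vC n) :
    List.ofFn (fun i => tau n e i) = indList n e := by
  have hl := length_indList hn e h
  rw [tau, dif_pos hl]
  exact ofFn_get_cast _ hl

def phiSub (n : ℕ) : Fin (n - 3) ≃ {w : Fin (n + 1) // 2 ≤ w.1 ∧ w.1 ≤ n - 2} where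
  toFun i := ⟨phi n i, by have := i.2; show 2 ≤ i.1 + 2 ∧ i.1 + 2 ≤ n - 2; omega⟩
  invFun w := ⟨w.1.1 - 2, by have h2 := w.2; have h3 := w.1.2; omega⟩
  left_inv i := Fin.ext (by show i.1 + 2 - 2 = i.1; omega)
  right_inv w := Subtype.ext (Fin.ext (by have h2 := w.2; show w.1.1 - 2 + 2 = w.1.1; omega))

/-- Extension of a path permutation to a permutation of the wheel's vertices. -/
def hatp (p : Equiv.Perm (Fin (n - 3))) : Equiv.Perm (Fin (n + 1)) :=
  p.extendDomain (phiSub n)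

lemma hatp_phi (p : Equiv.Perm (Fin (n - 3))) (i : Fin (n - 3)) :
    hatp p (phi n i) = phi n (p i) := by
  have := Equiv.Perm.extendDomain_apply_image p (phiSub n) i
  simpa [phiSub, hatp] using this

lemma hatp_not (p : Equiv.Perm (Fin (n - 3))) (w : Fin (n + 1))
    (hw : ¬ (2 ≤ w.1 ∧ w.1 ≤ n - 2)) : hatp p w = w :=
  Equiv.Perm.extendDomain_apply_not_subtype p (phiSub n) hw

lemma psi_hatp (p : Equiv.Perm (Fin (n - 3))) (w : Fin (n + 1)) :
    psi n (hatp p w) = (psi n w).map p := by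
  by_cases h : 2 ≤ w.1 ∧ w.1 ≤ n - 2
  · have hw : w = phi n (⟨w.1 - 2, by omega⟩ : Fin (n - 3)) := Fin.ext (by
      show w.1 = w.1 - 2 + 2; omega)
    rw [hw, hatp_phi, psi_phi, psi_phi, Option.map_some]
  · rw [hatp_not p w h, psi, dif_neg h, Option.map_none]

lemma hatp_vC (hn : 3 ≤ n) (p : Equiv.Perm (Fin (n - 3))) : hatp p (vC n) = vC n :=
  hatp_not p (vC n) (by show ¬ (2 ≤ n ∧ n ≤ n - 2); omega)

lemma indList_trans (p : Equiv.Perm (Fin (n - 3))) (e : Fin (n + 1) ≃ Fin (n + 1)) :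
    indList n (e.trans (hatp p)) = (indList n e).map p := by
  have h1 : tl n (e.trans (hatp p)) = (tl n e).map (hatp p) := by
    rw [tl, tl, List.map_ofFn]
    rfl
  rw [indList, h1, List.filterMap_map, indList]
  have h2 : (psi n) ∘ (hatp p) = fun w => (psi n w).map p := funext (psi_hatp p)
  rw [h2, ← List.map_filterMap]

lemma tau_trans (hn : 3 ≤ n) (p : Equiv.Perm (Fin (n - 3)))
    (e : Fin (n + 1) ≃ Fin (n + 1)) (h : e 0 = vC n) :
    tau n (e.trans (hatp p)) = (tau n e).trans p := by
  have h0 : (e.trans (hatp p)) 0 = vC n := by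
    show hatp p (e 0) = vC n
    rw [h, hatp_vC hn]
  have hl := length_indList hn e h
  have hl' := length_indList hn (e.trans (hatp p)) h0
  apply Equiv.ext
  intro i
  rw [tau, dif_pos hl', tau, dif_pos hl]
  show (indList n (e.trans (hatp p))).get _ = p ((indList n e).get _)
  rw [List.get_eq_getElem, List.get_eq_getElem,
    List.getElem_of_eq (indList_trans p e), List.getElem_map]
  rfl

open Classical in
lemma fiber_card_eq (hn : 3 ≤ n) (σ σ' : Fin (n - 3) ≃ Fin (n - 3)) :
    (Finset.univ.filter fun e : Fin (n + 1) ≃ Fin (n + 1) =>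
        e 0 = vC n ∧ tau n e = σ).card =
    (Finset.univ.filter fun e : Fin (n + 1) ≃ Fin (n + 1) =>
        e 0 = vC n ∧ tau n e = σ').card := by
  have key : ∀ (a b : Fin (n - 3) ≃ Fin (n - 3)) (e : Fin (n + 1) ≃ Fin (n + 1)),
      e 0 = vC n ∧ tau n e = a →
      ((e.trans (hatp (a⁻¹.trans b))) 0 = vC n ∧ tau n (e.trans (hatp (a⁻¹.trans b))) = b) := by
    rintro a b e ⟨h0, htau⟩
    constructor
    · show hatp _ (e 0) = vC n
      rw [h0, hatp_vC hn]
    · rw [tau_trans hn _ e h0, htau]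
      ext x
      simp
  have inv : ∀ (a b : Fin (n - 3) ≃ Fin (n - 3)) (e : Fin (n + 1) ≃ Fin (n + 1)),
      (e.trans (hatp (a⁻¹.trans b))).trans (hatp (b⁻¹.trans a)) = e := by
    intro a b e
    rw [Equiv.trans_assoc]
    show e.trans ((Equiv.Perm.extendDomain _ _).trans (Equiv.Perm.extendDomain _ _)) = e
    rw [Equiv.Perm.extendDomain_trans]
    have : (a⁻¹.trans b).trans (b⁻¹.trans a) = Equiv.refl _ := by ext x; simp
    rw [this]
    have : Equiv.Perm.extendDomain (Equiv.refl (Fin (n - 3))) (phiSub n) = Equiv.refl _ := by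
      ext w
      by_cases hw : 2 ≤ w.1 ∧ w.1 ≤ n - 2
      · have h2 := Equiv.Perm.extendDomain_apply_subtype
          (Equiv.refl (Fin (n - 3))) (phiSub n) hw
        simpa using h2
      · simpa using Equiv.Perm.extendDomain_apply_not_subtype
          (Equiv.refl (Fin (n - 3))) (phiSub n) hw
    rw [this, Equiv.trans_refl]
  apply Finset.card_bij' (fun e _ => e.trans (hatp (σ⁻¹.trans σ')))
    (fun e _ => e.trans (hatp (σ'⁻¹.trans σ)))
  · intro e _; exact inv σ σ' e
  · intro e _; exact inv σ' σ e
  · intro e he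
    simp only [Finset.mem_filter, Finset.mem_univ, true_and] at he ⊢
    exact key σ σ' e he
  · intro e he
    simp only [Finset.mem_filter, Finset.mem_univ, true_and] at he ⊢
    exact key σ' σ e he

open Classical in
lemma card_fiber_eq_factorial (v : Fin (n + 1)) :
    (Finset.univ.filter fun e : Fin (n + 1) ≃ Fin (n + 1) => e 0 = v).card =
      n.factorial := by
  have hconst : ∀ v w : Fin (n + 1),
      (Finset.univ.filter fun e : Fin (n + 1) ≃ Fin (n + 1) => e 0 = v).card =
      (Finset.univ.filter fun e : Fin (n + 1) ≃ Fin (n + 1) => e 0 = w).card := by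
    intro v w
    apply Finset.card_bij' (fun e _ => e.trans (Equiv.swap v w))
      (fun e _ => e.trans (Equiv.swap v w))
    · intro e _
      rw [Equiv.trans_assoc, Equiv.swap_swap, Equiv.trans_refl]
    · intro e _
      rw [Equiv.trans_assoc, Equiv.swap_swap, Equiv.trans_refl]
    · intro e he
      simp only [Finset.mem_filter, Finset.mem_univ, true_and] at he ⊢
      show Equiv.swap v w (e 0) = w
      rw [he, Equiv.swap_apply_left]
    · intro e he
      simp only [Finset.mem_filter, Finset.mem_univ, true_and] at he ⊢
      show Equiv.swap v w (e 0) = v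
      rw [he, Equiv.swap_apply_right]
  have htotal : (n + 1) * (Finset.univ.filter
      fun e : Fin (n + 1) ≃ Fin (n + 1) => e 0 = v).card = (n + 1).factorial := by
    have h1 : Fintype.card (Fin (n + 1) ≃ Fin (n + 1)) = (n + 1).factorial := by
      rw [Fintype.card_equiv (Equiv.refl _), Fintype.card_fin]
    have h2 : (Finset.univ : Finset (Fin (n + 1) ≃ Fin (n + 1))).card =
        ∑ w : Fin (n + 1), (Finset.univ.filter
          fun e : Fin (n + 1) ≃ Fin (n + 1) => e 0 = w).card :=
      Finset.card_eq_sum_card_fiberwise (fun _ _ => Finset.mem_univ _)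
    calc (n + 1) * (Finset.univ.filter
          fun e : Fin (n + 1) ≃ Fin (n + 1) => e 0 = v).card
        = ∑ _w : Fin (n + 1), (Finset.univ.filter
          fun e : Fin (n + 1) ≃ Fin (n + 1) => e 0 = v).card := by
          rw [Finset.sum_const, Finset.card_univ, Fintype.card_fin, smul_eq_mul]
      _ = ∑ w : Fin (n + 1), (Finset.univ.filter
          fun e : Fin (n + 1) ≃ Fin (n + 1) => e 0 = w).card :=
          Finset.sum_congr rfl (fun w _ => hconst v w)
      _ = (n + 1).factorial := by rw [← h2, Finset.card_univ, h1]
  rw [Nat.factorial_succ] at htotal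
  exact Nat.eq_of_mul_eq_mul_left (Nat.succ_pos n) htotal

lemma ofFn_cast_eq {α : Type*} {m m' : ℕ} (h : m' = m) (f : Fin m → α) :
    List.ofFn (fun i : Fin m' => f (Fin.cast h i)) = List.ofFn f := by
  subst h
  rfl

lemma gammaO_fin (m : ℕ) (G : SimpleGraph (Fin m)) :
    gammaO G = (∑ e : Fin m ≃ Fin m, ((domList G (List.ofFn fun i => e i)).card : ℝ)) /
      Nat.factorial m := by
  unfold gammaO
  rw [show (Nat.factorial (Fintype.card (Fin m)) : ℝ) = Nat.factorial m by
    rw [Fintype.card_fin]]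
  congr 1
  apply Fintype.sum_equiv
    (Equiv.equivCongr (finCongr (Fintype.card_fin m)) (Equiv.refl (Fin m)))
  intro e
  congr 1
  have : (List.ofFn fun i : Fin m =>
      (Equiv.equivCongr (finCongr (Fintype.card_fin m)) (Equiv.refl (Fin m)) e) i) =
      List.ofFn fun i : Fin m => e ((finCongr (Fintype.card_fin m)).symm i) := rfl
  rw [this]
  have h2 : ∀ i : Fin m, e ((finCongr (Fintype.card_fin m)).symm i) =
      e (Fin.cast (Fintype.card_fin m).symm i) := fun i => rfl
  rw [show (fun i : Fin m => e ((finCongr (Fintype.card_fin m)).symm i)) =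
      (fun i : Fin m => e (Fin.cast (Fintype.card_fin m).symm i)) from rfl,
    ofFn_cast_eq (Fintype.card_fin m).symm (fun i => e i)]

open Classical in
lemma side_sum (hn : 3 ≤ n) :
    ∑ e ∈ (Finset.univ.filter fun e : Fin (n + 1) ≃ Fin (n + 1) => e 0 = vC n),
        ((domList (wheelGraph n) (List.ofFn fun i => e i)).card : ℝ) =
      (n.factorial : ℝ) * (1 + gammaO (pathGraph (n - 3))) := by
  set S := Finset.univ.filter fun e : Fin (n + 1) ≃ Fin (n + 1) => e 0 = vC n with hS
  set g : (Fin (n - 3) ≃ Fin (n - 3)) → ℝ :=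
    fun σ => ((domList (pathGraph (n - 3)) (List.ofFn fun i => σ i)).card : ℝ) with hg
  have hmem : ∀ e ∈ S, e 0 = vC n := by
    intro e he
    exact (Finset.mem_filter.1 he).2
  have step1 : ∀ e ∈ S, ((domList (wheelGraph n) (List.ofFn fun i => e i)).card : ℝ) =
      1 + g (tau n e) := by
    intro e he
    rw [card_side hn e (hmem e he), hg]
    push_cast
    congr 2
    rw [ofFn_tau hn e (hmem e he)]
  rw [Finset.sum_congr rfl step1, Finset.sum_add_distrib, Finset.sum_const,
    nsmul_eq_mul, mul_one]
  -- now handle ∑ e in S, g (tau e)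
  set c : ℕ := (S.filter fun e => tau n e = Equiv.refl _).card with hc
  have hfiber : ∀ σ : Fin (n - 3) ≃ Fin (n - 3), (S.filter fun e => tau n e = σ).card = c := by
    intro σ
    rw [hc, hS, Finset.filter_filter, Finset.filter_filter]
    exact fiber_card_eq hn σ (Equiv.refl _)
  have hgsum : ∑ e ∈ S, g (tau n e) = (c : ℝ) * ∑ σ : Fin (n - 3) ≃ Fin (n - 3), g σ := by
    rw [← Finset.sum_fiberwise_of_maps_to (g := tau n) (t := Finset.univ)
      (fun _ _ => Finset.mem_univ _) (fun e => g (tau n e))]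
    rw [Finset.mul_sum]
    apply Finset.sum_congr rfl
    intro σ _
    have : ∀ e ∈ S.filter fun e => tau n e = σ, g (tau n e) = g σ := by
      intro e he
      rw [(Finset.mem_filter.1 he).2]
    rw [Finset.sum_congr rfl this, Finset.sum_const, hfiber σ, nsmul_eq_mul]
  have hcfact : c * (n - 3).factorial = n.factorial := by
    have h1 : S.card = ∑ σ : Fin (n - 3) ≃ Fin (n - 3), (S.filter fun e => tau n e = σ).card :=
      Finset.card_eq_sum_card_fiberwise (fun _ _ => Finset.mem_univ _)
    rw [Finset.sum_congr rfl (fun σ _ => hfiber σ), Finset.sum_const, Finset.card_univ,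
      Fintype.card_equiv (Equiv.refl _), Fintype.card_fin, smul_eq_mul] at h1
    rw [hS, card_fiber_eq_factorial (vC n)] at h1
    rw [Nat.mul_comm] at h1
    exact h1.symm
  have hgamma : ∑ σ : Fin (n - 3) ≃ Fin (n - 3), g σ =
      ((n - 3).factorial : ℝ) * gammaO (pathGraph (n - 3)) := by
    have hne : ((n - 3).factorial : ℝ) ≠ 0 := by
      exact_mod_cast (Nat.factorial_pos (n - 3)).ne'
    rw [gammaO_fin (n - 3) (pathGraph (n - 3)), mul_comm, div_mul_cancel₀ _ hne]
  rw [hgsum, hgamma, hS, card_fiber_eq_factorial (vC n)]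
  have : (c : ℝ) * (((n - 3).factorial : ℝ) * gammaO (pathGraph (n - 3))) =
      (n.factorial : ℝ) * gammaO (pathGraph (n - 3)) := by
    rw [← mul_assoc, ← Nat.cast_mul, hcfact]
  rw [this]
  ring

def rotf (n : ℕ) : Fin (n + 1) → Fin (n + 1) := fun w =>
  if h : w.1 = 0 then 0 else ⟨w.1 % n + 1, by
    have hw : w.1 ≤ n := by omega
    have hn1 : 0 < n := by omega
    have := Nat.mod_lt w.1 hn1
    omega⟩

lemma rotf_injective (n : ℕ) : Function.Injective (rotf n) := by
  intro a b hab
  have ha := a.2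
  have hb := b.2
  rw [rotf, rotf] at hab
  by_cases ha0 : a.1 = 0 <;> by_cases hb0 : b.1 = 0
  · exact Fin.ext (by omega)
  · rw [dif_pos ha0, dif_neg hb0] at hab
    have : (0 : Fin (n + 1)).1 = b.1 % n + 1 := congrArg Fin.val hab
    simp at this
  · rw [dif_neg ha0, dif_pos hb0] at hab
    have : a.1 % n + 1 = (0 : Fin (n + 1)).1 := congrArg Fin.val hab
    simp at this
  · rw [dif_neg ha0, dif_neg hb0] at hab
    have hval : a.1 % n + 1 = b.1 % n + 1 := congrArg Fin.val hab
    have h1 : a.1 % n = if a.1 = n then 0 else a.1 := by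
      split
      · rename_i h; rw [h, Nat.mod_self]
      · exact Nat.mod_eq_of_lt (by omega)
    have h2 : b.1 % n = if b.1 = n then 0 else b.1 := by
      split
      · rename_i h; rw [h, Nat.mod_self]
      · exact Nat.mod_eq_of_lt (by omega)
    apply Fin.ext
    split at h1 <;> split at h2 <;> omega

noncomputable def rotE (n : ℕ) : Fin (n + 1) ≃ Fin (n + 1) :=
  Equiv.ofBijective (rotf n) (Finite.injective_iff_bijective.1 (rotf_injective n))

lemma rotE_val_zero {n : ℕ} (x : Fin (n + 1)) (h : x.1 = 0) : (rotE n x).1 = 0 := by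
  show (rotf n x).1 = 0
  rw [rotf, dif_pos h]
  rfl

lemma rotE_val_pos {n : ℕ} (x : Fin (n + 1)) (h : x.1 ≠ 0) : (rotE n x).1 = x.1 % n + 1 := by
  show (rotf n x).1 = x.1 % n + 1
  rw [rotf, dif_neg h]

lemma rot_adj (hn : 3 ≤ n) (x y : Fin (n + 1)) :
    (wheelGraph n).Adj x y ↔ (wheelGraph n).Adj (rotE n x) (rotE n y) := by
  have fact : ∀ a : ℕ, 1 ≤ a → a ≤ n → (a = n ∧ a % n = 0) ∨ (a < n ∧ a % n = a) := by
    intro a h1 h2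
    rcases eq_or_lt_of_le h2 with rfl | h
    · exact Or.inl ⟨rfl, Nat.mod_self a⟩
    · exact Or.inr ⟨h, Nat.mod_eq_of_lt h⟩
  have hx := x.2
  have hy := y.2
  rw [wheel_adj_iff, wheel_adj_iff]
  by_cases hx0 : x.1 = 0 <;> by_cases hy0 : y.1 = 0
  · rw [rotE_val_zero x hx0, rotE_val_zero y hy0]; omega
  · rw [rotE_val_zero x hx0, rotE_val_pos y hy0]
    have := fact y.1 (by omega) (by omega)
    omega
  · rw [rotE_val_pos x hx0, rotE_val_zero y hy0]
    have := fact x.1 (by omega) (by omega)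
    omega
  · rw [rotE_val_pos x hx0, rotE_val_pos y hy0]
    have ka := fact x.1 (by omega) (by omega)
    have kb := fact y.1 (by omega) (by omega)
    have hxa : x.1 % n < n := Nat.mod_lt x.1 (by omega)
    have hyb : y.1 % n < n := Nat.mod_lt y.1 (by omega)
    have ka' := fact (x.1 % n + 1) (by omega) (by omega)
    have kb' := fact (y.1 % n + 1) (by omega) (by omega)
    omega

open Classical in
/-- Sum of dominating-set sizes over permutations starting at `v`. -/
noncomputable def T (n : ℕ) (v : Fin (n + 1)) : ℝ :=
  ∑ e ∈ (Finset.univ.filter fun e : Fin (n + 1) ≃ Fin (n + 1) => e 0 = v),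
    ((domList (wheelGraph n) (List.ofFn fun i => e i)).card : ℝ)

lemma T_rot (hn : 3 ≤ n) (v : Fin (n + 1)) : T n v = T n (rotE n v) := by
  rw [T, T]
  apply Finset.sum_bij' (fun e _ => e.trans (rotE n)) (fun e _ => e.trans (rotE n).symm)
  · intro e _
    rw [Equiv.trans_assoc, Equiv.self_trans_symm, Equiv.trans_refl]
  · intro e _
    rw [Equiv.trans_assoc, Equiv.symm_trans_self, Equiv.trans_refl]
  · intro e _
    congr 1
    have h1 : (List.ofFn fun i => (e.trans (rotE n)) i) =
        (List.ofFn fun i => e i).map (rotE n) := by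
      rw [List.map_ofFn]
      rfl
    rw [h1, card_domList_map (wheelGraph n) (wheelGraph n) (rotE n)
      (rotE n).injective (fun x y => rot_adj hn x y)]
  · intro e he
    simp only [Finset.mem_filter, Finset.mem_univ, true_and] at he ⊢
    show rotE n (e 0) = rotE n v
    rw [he]
  · intro e he
    simp only [Finset.mem_filter, Finset.mem_univ, true_and] at he ⊢
    show (rotE n).symm (e 0) = v
    rw [he, Equiv.symm_apply_apply]

lemma T_side_eq (hn : 3 ≤ n) : ∀ v : Fin (n + 1), v ≠ 0 → T n v = T n (vC n) := by
  suffices h : ∀ (k : ℕ) (v : Fin (n + 1)), v ≠ 0 → n - v.1 = k → T n v = T n (vC n) by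
    intro v hv
    exact h (n - v.1) v hv rfl
  intro k
  induction k with
  | zero =>
    intro v hv hk
    have hv1 : v.1 ≠ 0 := fun h => hv (Fin.ext h)
    have := v.2
    have : v = vC n := Fin.ext (by show v.1 = n; omega)
    rw [this]
  | succ k ih =>
    intro v hv hk
    have hv1 : v.1 ≠ 0 := fun h => hv (Fin.ext h)
    have hvlt := v.2
    by_cases hvn : v.1 = n
    · have : v = vC n := Fin.ext hvn
      rw [this]
    · have hrv : (rotE n v).1 = v.1 + 1 := by
        rw [rotE_val_pos v hv1, Nat.mod_eq_of_lt (by omega)]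
      rw [T_rot hn v]
      exact ih (rotE n v) (fun h => by
        have : (rotE n v).1 = 0 := by rw [h]; rfl
        omega) (by omega)

open Classical in
theorem gammaO_wheel' (n : ℕ) (hn : 3 ≤ n) :
    gammaO (wheelGraph n) = 1 + ((n : ℝ) / ((n : ℝ) + 1)) * gammaO (pathGraph (n - 3)) := by
  rw [gammaO_fin (n + 1) (wheelGraph n)]
  have hsplit : (∑ e : Fin (n + 1) ≃ Fin (n + 1),
      ((domList (wheelGraph n) (List.ofFn fun i => e i)).card : ℝ)) =
      ∑ v : Fin (n + 1), T n v := by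
    rw [eq_comm]
    unfold T
    exact Finset.sum_fiberwise_of_maps_to (fun _ _ => Finset.mem_univ _) _
  have hT0 : T n 0 = (n.factorial : ℝ) := by
    rw [T]
    have : ∀ e ∈ (Finset.univ.filter fun e : Fin (n + 1) ≃ Fin (n + 1) => e 0 = 0),
        ((domList (wheelGraph n) (List.ofFn fun i => e i)).card : ℝ) = 1 := by
      intro e he
      rw [card_center e (Finset.mem_filter.1 he).2]
      norm_num
    rw [Finset.sum_congr rfl this, Finset.sum_const, card_fiber_eq_factorial (0 : Fin (n + 1)),
      nsmul_eq_mul, mul_one]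
  have hTside : T n (vC n) = (n.factorial : ℝ) * (1 + gammaO (pathGraph (n - 3))) := by
    rw [T]
    exact side_sum hn
  have hsum : (∑ v : Fin (n + 1), T n v) =
      (n.factorial : ℝ) + n * ((n.factorial : ℝ) * (1 + gammaO (pathGraph (n - 3)))) := by
    rw [Fin.sum_univ_succ, hT0]
    congr 1
    have : ∀ i : Fin n, T n i.succ = (n.factorial : ℝ) * (1 + gammaO (pathGraph (n - 3))) := by
      intro i
      rw [T_side_eq hn i.succ (Fin.succ_ne_zero i), hTside]
    rw [Finset.sum_congr rfl (fun i _ => this i), Finset.sum_const, Finset.card_univ,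
      Fintype.card_fin, nsmul_eq_mul]
  rw [hsplit, hsum, Nat.factorial_succ]
  have hfac : (n.factorial : ℝ) ≠ 0 := by exact_mod_cast (Nat.factorial_pos n).ne'
  have hn1 : ((n : ℝ) + 1) ≠ 0 := by positivity
  push_cast
  field_simp
  ring


end Wheel

theorem gammaO_wheel (n : ℕ) (hn : 3 ≤ n) :
    gammaO (wheelGraph n) = 1 + ((n : ℝ) / ((n : ℝ) + 1)) * gammaO (pathGraph (n - 3)) :=
  Wheel.gammaO_wheel' n hn
end

section
/- For the complete multipartite graph with parts of sizes p_1, ..., p_k (each p_i ≥ 1, k ≥ 1), the expected online domination number equals γ_o(K_{p_1,...,p_k}) = (Σ_{i=1}^k p_i²)/(Σ_{i=1}^k p_i). -/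
/- The complete multipartite graph with parts of sizes `p 0, ..., p (k-1)`: vertices in
   different blocks are adjacent, vertices in the same block are not. -/
def completeMultipartite {k : ℕ} (p : Fin k → ℕ) : SimpleGraph (Σ i : Fin k, Fin (p i)) where
  Adj u v := u.1 ≠ v.1
  symm := ⟨fun u v h => h.symm⟩
  loopless := ⟨fun u h => h rfl⟩

open Classical in
lemma foldl_block {k : ℕ} (p : Fin k → ℕ) (i : Fin k)
    (l : List (Σ i : Fin k, Fin (p i))) :
    ∀ D : Finset (Σ i : Fin k, Fin (p i)), D.Nonempty → (∀ w ∈ D, w.1 = i) →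
    l.foldl (fun D v => if ∃ w ∈ D, (completeMultipartite p).Adj w v then D else insert v D) D
      = D ∪ (l.filter (fun v => v.1 = i)).toFinset := by
  induction l with
  | nil => intro D _ _; simp
  | cons v l ih =>
    intro D hD hDi
    by_cases hv : v.1 = i
    · rw [List.foldl_cons, if_neg, ih (insert v D) ⟨v, Finset.mem_insert_self v D⟩]
      · simp [List.filter_cons, hv, Finset.insert_union, Finset.union_insert]
      · intro w hw
        rcases Finset.mem_insert.mp hw with h | h
        · rw [h, hv]
        · exact hDi w h
      · push_neg
        intro w hw
        show ¬ w.1 ≠ v.1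
        rw [hDi w hw, hv]
        simp
    · rw [List.foldl_cons, if_pos, ih D hD hDi]
      · simp [List.filter_cons, hv]
      · obtain ⟨w, hw⟩ := hD
        exact ⟨w, hw, by show w.1 ≠ v.1; rw [hDi w hw]; exact fun h => hv h.symm⟩

open Classical in
lemma card_fiber {k : ℕ} (p : Fin k → ℕ) (i : Fin k) :
    (Finset.univ.filter (fun u : Σ i : Fin k, Fin (p i) => u.1 = i)).card = p i := by
  rw [Finset.card_filter, ← Finset.univ_sigma_univ, Finset.sum_sigma]
  simp [apply_ite Finset.card, Finset.sum_ite_eq]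

open Classical in
lemma card_domList {k : ℕ} (p : Fin k → ℕ) {n : ℕ}
    (e : Fin (n + 1) ≃ (Σ i : Fin k, Fin (p i))) :
    (domList (completeMultipartite p) (List.ofFn fun j => e j)).card = p (e 0).1 := by
  have hl : (List.ofFn fun j => e j) = e 0 :: List.ofFn fun j : Fin n => e j.succ :=
    List.ofFn_succ
  unfold domList
  rw [hl, List.foldl_cons, if_neg (by simp),
    foldl_block p (e 0).1 _ (insert (e 0) ∅) ⟨e 0, Finset.mem_insert_self _ _⟩ (by simp)]
  have hset : (insert (e 0) ∅ : Finset _) ∪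
      ((List.ofFn fun j : Fin n => e j.succ).filter (fun v => v.1 = (e 0).1)).toFinset
      = Finset.univ.filter (fun u => u.1 = (e 0).1) := by
    ext u
    simp only [Finset.mem_union, Finset.mem_insert, Finset.notMem_empty, or_false,
      List.mem_toFinset, List.mem_filter, List.mem_ofFn, Finset.mem_filter, Finset.mem_univ,
      true_and, Set.mem_range, decide_eq_true_eq]
    constructor
    · rintro (rfl | ⟨_, h⟩)
      · rfl
      · exact h
    · intro hu
      rcases Fin.eq_zero_or_eq_succ (e.symm u) with h0 | ⟨j, hj⟩
      · left; rw [← e.apply_symm_apply u, h0]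
      · right; exact ⟨⟨j, by rw [← hj, e.apply_symm_apply]⟩, hu⟩
  rw [hset, card_fiber]

lemma sum_eval_zero {n : ℕ} {V : Type*} [DecidableEq V] [Fintype V]
    (hV : Fintype.card V = n + 1) (f : V → ℝ) :
    ∑ e : Fin (n + 1) ≃ V, f (e 0) = (n.factorial : ℝ) * ∑ v : V, f v := by
  classical
  have e0 : Fin (n + 1) ≃ V := (Fintype.equivFinOfCardEq hV).symm
  set c : V → ℕ := fun v => (Finset.univ.filter (fun e : Fin (n + 1) ≃ V => e 0 = v)).card
    with hc
  have hcc : ∀ v w : V, c v = c w := by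
    intro v w
    apply Finset.card_bij' (fun e _ => e.trans (Equiv.swap v w))
      (fun e _ => e.trans (Equiv.swap v w))
    · intro e _; ext x; simp [Equiv.trans_apply]
    · intro e _; ext x; simp [Equiv.trans_apply]
    · intro e he
      simp only [Finset.mem_filter, Finset.mem_univ, true_and] at he ⊢
      simp [Equiv.trans_apply, he, Equiv.swap_apply_left]
    · intro e he
      simp only [Finset.mem_filter, Finset.mem_univ, true_and] at he ⊢
      simp [Equiv.trans_apply, he, Equiv.swap_apply_right]
  have himg : Finset.image (fun e : Fin (n + 1) ≃ V => e 0) Finset.univ = Finset.univ := by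
    apply Finset.eq_univ_of_forall
    intro v
    exact Finset.mem_image.mpr ⟨e0.trans (Equiv.swap (e0 0) v), Finset.mem_univ _,
      by simp [Equiv.trans_apply, Equiv.swap_apply_left]⟩
  have hfact : ∀ v : V, c v = n.factorial := by
    intro v
    have h1 : Fintype.card (Fin (n + 1) ≃ V) = ∑ w : V, c w :=
      Finset.card_eq_sum_card_fiberwise (fun e _ => Finset.mem_univ (e 0))
    have h2 : ∑ w : V, c w = (n + 1) * c v := by
      rw [Finset.sum_congr rfl (fun w _ => hcc w v), Finset.sum_const, smul_eq_mul,
        Finset.card_univ, hV]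
    have h3 : Fintype.card (Fin (n + 1) ≃ V) = (n + 1).factorial := by
      rw [Fintype.card_equiv e0, Fintype.card_fin]
    have : (n + 1) * c v = (n + 1) * n.factorial := by
      rw [← h2, ← h1, h3, Nat.factorial_succ]
    exact Nat.eq_of_mul_eq_mul_left (Nat.succ_pos n) this
  rw [Finset.sum_comp f (fun e : Fin (n + 1) ≃ V => e 0), himg]
  have hfact' : ∀ b : V,
      (Finset.univ.filter (fun e : Fin (n + 1) ≃ V => e 0 = b)).card = n.factorial := hfact
  simp only [hfact', nsmul_eq_mul]
  rw [Finset.mul_sum]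

theorem gammaO_completeMultipartite (k : ℕ) (hk : 1 ≤ k) (p : Fin k → ℕ)
    (hp : ∀ i, 1 ≤ p i) :
    gammaO (completeMultipartite p) =
      (∑ i : Fin k, (p i : ℝ) ^ 2) / (∑ i : Fin k, (p i : ℝ)) := by
  classical
  have hn : Fintype.card (Σ i : Fin k, Fin (p i)) = ∑ i : Fin k, p i := by
    simp [Fintype.card_sigma]
  have hone : 1 ≤ ∑ i : Fin k, p i :=
    le_trans (hp ⟨0, hk⟩)
      (Finset.single_le_sum (fun i _ => Nat.zero_le _) (Finset.mem_univ (⟨0, hk⟩ : Fin k)))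
  obtain ⟨m, hm⟩ : ∃ m, Fintype.card (Σ i : Fin k, Fin (p i)) = m + 1 :=
    ⟨Fintype.card (Σ i : Fin k, Fin (p i)) - 1, by omega⟩
  unfold gammaO
  rw [hm]
  have hcd : ∀ e : Fin (m + 1) ≃ (Σ i : Fin k, Fin (p i)),
      ((domList (completeMultipartite p) (List.ofFn fun i => e i)).card : ℝ)
        = (p (e 0).1 : ℝ) := fun e => by rw [card_domList]
  rw [Finset.sum_congr rfl (fun e _ => hcd e),
    sum_eval_zero hm (fun v : Σ i : Fin k, Fin (p i) => (p v.1 : ℝ))]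
  have hsum2 : ∑ v : (Σ i : Fin k, Fin (p i)), (p v.1 : ℝ) = ∑ i : Fin k, (p i : ℝ) ^ 2 := by
    rw [← Finset.univ_sigma_univ, Finset.sum_sigma]
    simp [sq]
  have hden : (∑ i : Fin k, (p i : ℝ)) = (m : ℝ) + 1 := by
    have h : ∑ i : Fin k, p i = m + 1 := by omega
    exact_mod_cast congrArg (Nat.cast : ℕ → ℝ) h
  rw [hsum2, hden, Nat.factorial_succ]
  push_cast
  rw [mul_comm ((m : ℝ) + 1) (m.factorial : ℝ),
    mul_div_mul_left _ _ (by positivity : (m.factorial : ℝ) ≠ 0)]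
end

section
/- For every integer n ≥ 1, the number of independent dominating sets of the path P_n having the maximum possible size ⌈n/2⌉ equals n/2 + 1 if n is even, and equals 1 if n is odd. -/
/- `S` is an independent dominating set of `P n`. -/
def IsIndepDomSet (n : ℕ) (S : Finset (Fin n)) : Prop :=
  (∀ u ∈ S, ∀ v ∈ S, ¬ (pathGraph n).Adj u v) ∧
  (∀ v : Fin n, v ∈ S ∨ ∃ u ∈ S, (pathGraph n).Adj u v)

/-- The candidate maximum independent dominating sets: even positions below `2k`,
odd positions from `2k` on. -/
def Fset (n k : ℕ) : Finset (Fin n) :=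
  Finset.univ.filter (fun v => (v : ℕ) % 2 = if (v : ℕ) < 2 * k then 0 else 1)

lemma mem_Fset {n k : ℕ} {v : Fin n} :
    v ∈ Fset n k ↔ (v : ℕ) % 2 = if (v : ℕ) < 2 * k then 0 else 1 := by
  simp [Fset]

/-- Goodness condition on `k`. -/
def Good (n k : ℕ) : Prop := (n % 2 = 0 ∧ 2 * k ≤ n) ∨ (n % 2 = 1 ∧ 2 * k = n + 1)

lemma Fset_indep (n k : ℕ) : ∀ u ∈ Fset n k, ∀ v ∈ Fset n k, ¬ (pathGraph n).Adj u v := by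
  intro u hu v hv hadj
  rw [mem_Fset] at hu hv
  rcases hadj with h | h <;> split_ifs at hu hv <;> omega

lemma Fset_dom (n k : ℕ) (hk : Good n k) :
    ∀ v : Fin n, v ∈ Fset n k ∨ ∃ u ∈ Fset n k, (pathGraph n).Adj u v := by
  intro v
  by_cases hv : v ∈ Fset n k
  · exact Or.inl hv
  · right
    rw [mem_Fset] at hv
    have hvn := v.isLt
    rcases Nat.lt_or_ge (v : ℕ) (2 * k) with h | h
    · -- v is odd, below 2k; use v - 1
      have hodd : (v : ℕ) % 2 = 1 := by split_ifs at hv <;> omega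
      refine ⟨⟨(v : ℕ) - 1, by omega⟩, ?_, Or.inl (by simp; omega)⟩
      rw [mem_Fset]
      simp only []
      split_ifs <;> simp_all <;> omega
    · -- v is even, ≥ 2k
      have heven : (v : ℕ) % 2 = 0 := by split_ifs at hv <;> omega
      rcases hk with ⟨hpar, hle⟩ | ⟨hpar, heq⟩
      · rcases Nat.lt_or_ge (2 * k) (v : ℕ) with h2 | h2
        · -- v ≥ 2k + 2, use v - 1 (odd, ≥ 2k)
          refine ⟨⟨(v : ℕ) - 1, by omega⟩, ?_, Or.inl (by simp; omega)⟩
          rw [mem_Fset]; simp only []; split_ifs <;> simp_all <;> omega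
        · -- v = 2k, use v + 1 (odd, ≥ 2k); need v + 1 < n
          refine ⟨⟨(v : ℕ) + 1, by omega⟩, ?_, Or.inr (by simp)⟩
          rw [mem_Fset]; simp only []; split_ifs <;> simp_all <;> omega
      · omega

lemma Fset_card (n k : ℕ) (hk : Good n k) : (Fset n k).card = (n + 1) / 2 := by
  rw [← Finset.card_range ((n + 1) / 2)]
  refine Finset.card_bij (fun (v : Fin n) (_ : v ∈ Fset n k) => (v : ℕ) / 2) ?_ ?_ ?_
  · intro v hv
    have := v.isLt
    exact Finset.mem_range.2 (show (v : ℕ) / 2 < (n + 1) / 2 by omega)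
  · intro u hu v hv huv
    rw [mem_Fset] at hu hv
    have huv' : (u : ℕ) / 2 = (v : ℕ) / 2 := huv
    apply Fin.ext
    split_ifs at hu hv <;> omega
  · intro i hi
    rw [Finset.mem_range] at hi
    rcases Nat.lt_or_ge i k with h | h
    · have h2 : 2 * i < n := by rcases hk with ⟨_, _⟩ | ⟨_, _⟩ <;> omega
      refine ⟨⟨2 * i, h2⟩, ?_, show 2 * i / 2 = i by omega⟩
      rw [mem_Fset]
      show 2 * i % 2 = if 2 * i < 2 * k then 0 else 1
      split_ifs <;> omega
    · have h2 : 2 * i + 1 < n := by rcases hk with ⟨_, _⟩ | ⟨_, _⟩ <;> omega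
      refine ⟨⟨2 * i + 1, h2⟩, ?_, show (2 * i + 1) / 2 = i by omega⟩
      rw [mem_Fset]
      show (2 * i + 1) % 2 = if 2 * i + 1 < 2 * k then 0 else 1
      split_ifs <;> omega

lemma indep_max_eq (n : ℕ) (S : Finset (Fin n))
    (hind : ∀ u ∈ S, ∀ v ∈ S, ¬ (pathGraph n).Adj u v)
    (hcard : S.card = (n + 1) / 2) :
    ∃ k, Good n k ∧ S = Fset n k := by
  classical
  -- uniqueness within a block
  have huniq : ∀ v ∈ S, ∀ w ∈ S, (v : ℕ) / 2 = (w : ℕ) / 2 → v = w := by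
    intro v hv w hw hvw
    by_contra hne
    have hne' : (v : ℕ) ≠ (w : ℕ) := fun h => hne (Fin.ext h)
    exact hind v hv w hw (by rcases Nat.lt_or_ge (v : ℕ) (w : ℕ) with h | h
                             · exact Or.inl (by omega)
                             · exact Or.inr (by omega))
  -- existence within each block
  have hone : ∀ i ∈ Finset.range ((n + 1) / 2),
      (S.filter (fun v : Fin n => (v : ℕ) / 2 = i)).card = 1 := by
    have hsum : S.card = ∑ i ∈ Finset.range ((n + 1) / 2),
        (S.filter (fun v : Fin n => (v : ℕ) / 2 = i)).card :=
      Finset.card_eq_sum_card_fiberwise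
        (s := S) (f := fun v : Fin n => (v : ℕ) / 2) (t := Finset.range ((n + 1) / 2))
        (fun v _ => Finset.mem_range.2 (show (v : ℕ) / 2 < (n + 1) / 2 by
          have := v.isLt; omega))
    have hle : ∀ i ∈ Finset.range ((n + 1) / 2),
        (S.filter (fun v : Fin n => (v : ℕ) / 2 = i)).card ≤ 1 := by
      intro i _
      apply Finset.card_le_one.2
      intro a ha b hb
      rw [Finset.mem_filter] at ha hb
      exact huniq a ha.1 b hb.1 (by omega)
    intro i hi
    by_contra hne
    have h0 : (S.filter (fun v : Fin n => (v : ℕ) / 2 = i)).card = 0 := by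
      have := hle i hi; omega
    have hsum2 : ∑ j ∈ Finset.range ((n + 1) / 2),
        (S.filter (fun v : Fin n => (v : ℕ) / 2 = j)).card =
        (S.filter (fun v : Fin n => (v : ℕ) / 2 = i)).card +
        ∑ j ∈ (Finset.range ((n + 1) / 2)).erase i,
          (S.filter (fun v : Fin n => (v : ℕ) / 2 = j)).card :=
      (Finset.add_sum_erase _ _ hi).symm
    have hb : ∑ j ∈ (Finset.range ((n + 1) / 2)).erase i,
        (S.filter (fun v : Fin n => (v : ℕ) / 2 = j)).card ≤
        ((Finset.range ((n + 1) / 2)).erase i).card • 1 :=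
      Finset.sum_le_card_nsmul _ _ 1 (fun j hj => hle j (Finset.mem_of_mem_erase hj))
    have hc : ((Finset.range ((n + 1) / 2)).erase i).card = (n + 1) / 2 - 1 := by
      rw [Finset.card_erase_of_mem hi, Finset.card_range]
    rw [Finset.mem_range] at hi
    simp only [smul_eq_mul, mul_one] at hb
    omega
  have hex : ∀ i, i < (n + 1) / 2 → ∃ v ∈ S, (v : ℕ) / 2 = i := by
    intro i hi
    have h1 := hone i (Finset.mem_range.2 hi)
    have : (S.filter (fun v : Fin n => (v : ℕ) / 2 = i)).Nonempty :=
      Finset.card_pos.1 (by omega)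
    obtain ⟨v, hv⟩ := this
    rw [Finset.mem_filter] at hv
    exact ⟨v, hv.1, hv.2⟩
  rcases Nat.mod_two_eq_zero_or_one n with hpar | hpar
  · -- even case
    set m := n / 2 with hm
    -- T = set of block indices where the even element is chosen
    set T : Finset ℕ := (Finset.range m).filter (fun i => ∃ v ∈ S, (v : ℕ) = 2 * i) with hT
    have hstep : ∀ i, (i + 1) ∈ T → i ∈ T := by
      intro i hi
      simp only [hT, Finset.mem_filter, Finset.mem_range] at hi ⊢
      obtain ⟨hi1, v, hv, hveq⟩ := hi
      refine ⟨by omega, ?_⟩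
      obtain ⟨w, hw, hw2⟩ := hex i (by omega)
      refine ⟨w, hw, ?_⟩
      by_contra hne
      exact hind w hw v hv (Or.inl (by omega))
    have hdown : ∀ d i, i + d ∈ T → i ∈ T := by
      intro d
      induction d with
      | zero => intro i hi; exact hi
      | succ d ih => intro i hi; exact ih i (hstep (i + d) (by
          have : i + (d + 1) = (i + d) + 1 := by omega
          rwa [this] at hi))
    set k := T.card with hk
    have hTsub : T ⊆ Finset.range m := Finset.filter_subset _ _
    have hkm : k ≤ m := by
      have := Finset.card_le_card hTsub
      simpa [Finset.card_range] using this
    have hmemT : ∀ i, i ∈ T ↔ i < k := by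
      intro i
      constructor
      · intro hi
        have hsub : Finset.range (i + 1) ⊆ T := by
          intro j hj
          rw [Finset.mem_range] at hj
          exact hdown (i - j) j (by have : j + (i - j) = i := by omega
                                    rwa [this])
        have := Finset.card_le_card hsub
        simp only [Finset.card_range] at this
        omega
      · intro hi
        by_contra hni
        have hsub : T ⊆ Finset.range i := by
          intro j hj
          rw [Finset.mem_range]
          by_contra hji
          exact hni (hdown (j - i) i (by have : i + (j - i) = j := by omega
                                         rwa [this]))
        have := Finset.card_le_card hsub
        simp only [Finset.card_range] at this
        omega
    refine ⟨k, Or.inl ⟨hpar, by omega⟩, ?_⟩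
    ext v
    rw [mem_Fset]
    have hvn := v.isLt
    have hblock : (v : ℕ) / 2 < m := by omega
    rcases Nat.mod_two_eq_zero_or_one (v : ℕ) with hvp | hvp
    · -- v even
      have hiff : v ∈ S ↔ (v : ℕ) / 2 ∈ T := by
        constructor
        · intro hv
          simp only [hT, Finset.mem_filter, Finset.mem_range]
          exact ⟨hblock, v, hv, by omega⟩
        · intro hi
          simp only [hT, Finset.mem_filter, Finset.mem_range] at hi
          obtain ⟨_, w, hw, hweq⟩ := hi
          have : w = v := Fin.ext (by omega)
          rwa [this] at hw
      rw [hiff, hmemT]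
      split_ifs <;> omega
    · -- v odd
      have hiff : v ∈ S ↔ ¬ ((v : ℕ) / 2 ∈ T) := by
        constructor
        · intro hv hi
          simp only [hT, Finset.mem_filter, Finset.mem_range] at hi
          obtain ⟨_, w, hw, hweq⟩ := hi
          have := huniq v hv w hw (by omega)
          omega
        · intro hi
          obtain ⟨w, hw, hw2⟩ := hex ((v : ℕ) / 2) (by omega)
          have hwv : (w : ℕ) = 2 * ((v : ℕ) / 2) ∨ (w : ℕ) = 2 * ((v : ℕ) / 2) + 1 := by
            omega
          rcases hwv with hwe | hwo
          · exact absurd (by simp only [hT, Finset.mem_filter, Finset.mem_range]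
                             exact ⟨hblock, w, hw, hwe⟩) hi
          · have : w = v := Fin.ext (by omega)
            rwa [this] at hw
      rw [hiff, hmemT]
      split_ifs <;> omega
  · -- odd case: S must be all even positions
    set m := n / 2 with hm
    have heven : ∀ j, j ≤ m → ∃ v ∈ S, (v : ℕ) = 2 * (m - j) := by
      intro j
      induction j with
      | zero =>
        intro _
        obtain ⟨v, hv, hv2⟩ := hex m (by omega)
        exact ⟨v, hv, by have := v.isLt; omega⟩
      | succ j ih =>
        intro hj
        obtain ⟨v, hv, hveq⟩ := ih (by omega)
        obtain ⟨w, hw, hw2⟩ := hex (m - (j + 1)) (by omega)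
        refine ⟨w, hw, ?_⟩
        by_contra hne
        exact hind w hw v hv (Or.inl (by omega))
    have heven' : ∀ i, i ≤ m → ∃ v ∈ S, (v : ℕ) = 2 * i := by
      intro i hi
      have := heven (m - i) (by omega)
      simpa [Nat.sub_sub_self hi] using this
    refine ⟨(n + 1) / 2, Or.inr ⟨hpar, by omega⟩, ?_⟩
    ext v
    rw [mem_Fset]
    have hvn := v.isLt
    have hlt : (v : ℕ) < 2 * ((n + 1) / 2) := by omega
    rw [if_pos hlt]
    constructor
    · intro hv
      by_contra hvp
      have hvp' : (v : ℕ) % 2 = 1 := by omega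
      obtain ⟨w, hw, hweq⟩ := heven' ((v : ℕ) / 2) (by omega)
      have := huniq v hv w hw (by omega)
      omega
    · intro hvp
      obtain ⟨w, hw, hweq⟩ := heven' ((v : ℕ) / 2) (by omega)
      have : w = v := Fin.ext (by omega)
      rwa [this] at hw

lemma Fset_injOn (n : ℕ) : ∀ k k', Good n k → Good n k' → Fset n k = Fset n k' → k = k' := by
  intro k k' hk hk' heq
  by_contra hne
  -- wlog k < k'
  wlog hlt : k < k' generalizing k k'
  · exact this k' k hk' hk heq.symm (Ne.symm hne) (by omega)
  have h2k : 2 * k < n := by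
    rcases hk' with ⟨_, _⟩ | ⟨hpar, h2⟩
    · omega
    · omega
  have hv : (⟨2 * k, h2k⟩ : Fin n) ∈ Fset n k' := by
    rw [mem_Fset]; simp only []; split_ifs <;> omega
  rw [← heq, mem_Fset] at hv
  simp only [] at hv
  split_ifs at hv <;> omega

theorem count_max_indep_dom_sets (n : ℕ) (hn : 1 ≤ n) :
    Nat.card {S : Finset (Fin n) // IsIndepDomSet n S ∧ S.card = (n + 1) / 2} =
      if n % 2 = 0 then n / 2 + 1 else 1 := by
  classical
  rcases Nat.mod_two_eq_zero_or_one n with hpar | hpar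
  · rw [if_pos hpar]
    have key : ∀ S : Finset (Fin n),
        (IsIndepDomSet n S ∧ S.card = (n + 1) / 2) ↔
          ∃ k ∈ Finset.range (n / 2 + 1), Fset n k = S := by
      intro S
      constructor
      · rintro ⟨⟨hind, _⟩, hcard⟩
        obtain ⟨k, hk, hSeq⟩ := indep_max_eq n S hind hcard
        refine ⟨k, Finset.mem_range.2 ?_, hSeq.symm⟩
        rcases hk with ⟨_, h⟩ | ⟨h, _⟩ <;> omega
      · rintro ⟨k, hk, rfl⟩
        rw [Finset.mem_range] at hk
        have hg : Good n k := Or.inl ⟨hpar, by omega⟩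
        exact ⟨⟨Fset_indep n k, Fset_dom n k hg⟩, Fset_card n k hg⟩
    have hsetEq : {S : Finset (Fin n) | IsIndepDomSet n S ∧ S.card = (n + 1) / 2} =
        ↑((Finset.range (n / 2 + 1)).image (Fset n)) := by
      ext S
      simp only [Set.mem_setOf_eq, Finset.coe_image, Set.mem_image, Finset.mem_coe]
      constructor
      · intro h
        obtain ⟨k, hk, hke⟩ := (key S).1 h
        exact ⟨k, hk, hke⟩
      · rintro ⟨k, hk, hke⟩
        exact (key S).2 ⟨k, hk, hke⟩
    have h1 : Nat.card {S : Finset (Fin n) // IsIndepDomSet n S ∧ S.card = (n + 1) / 2} =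
        Set.ncard {S : Finset (Fin n) | IsIndepDomSet n S ∧ S.card = (n + 1) / 2} :=
      Nat.card_coe_set_eq _
    rw [h1, hsetEq, Set.ncard_coe_finset]
    rw [Finset.card_image_of_injOn, Finset.card_range]
    intro k hk k' hk' heq
    simp only [Finset.coe_range, Set.mem_Iio] at hk hk'
    exact Fset_injOn n k k' (Or.inl ⟨hpar, by omega⟩) (Or.inl ⟨hpar, by omega⟩) heq
  · rw [if_neg (by omega)]
    have hg : Good n ((n + 1) / 2) := Or.inr ⟨hpar, by omega⟩
    have key : ∀ S : Finset (Fin n),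
        (IsIndepDomSet n S ∧ S.card = (n + 1) / 2) ↔ S = Fset n ((n + 1) / 2) := by
      intro S
      constructor
      · rintro ⟨⟨hind, _⟩, hcard⟩
        obtain ⟨k, hk, hSeq⟩ := indep_max_eq n S hind hcard
        have : k = (n + 1) / 2 := by
          rcases hk with ⟨h, _⟩ | ⟨_, h⟩ <;> omega
        rwa [this] at hSeq
      · rintro rfl
        exact ⟨⟨Fset_indep n _, Fset_dom n _ hg⟩, Fset_card n _ hg⟩
    rw [Nat.card_eq_one_iff_unique]
    refine ⟨⟨fun a b => ?_⟩, ⟨⟨Fset n ((n + 1) / 2), (key _).2 rfl⟩⟩⟩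
    obtain ⟨S, hS⟩ := a
    obtain ⟨S', hS'⟩ := b
    have h1 := (key S).1 hS
    have h2 := (key S').1 hS'
    exact Subtype.ext (h1.trans h2.symm)
end

section
/- For odd n ≥ 1, the unique independent dominating set of P_n of size (n+1)/2 is the set of all odd vertices {1, 3, 5, ..., n}. For even n ≥ 2, the independent dominating sets of P_n of size n/2 are exactly: the set of all even vertices {2,4,...,n}, the set of all odd vertices {1,3,...,n−1}, and the sets {1, 3, 5, ..., 2j−1, 2j+2, 2j+4, ..., n} for each integer j with 1 ≤ j ≤ n/2 − 1. -/
lemma block_card_one {n : ℕ} (S : Finset (Fin n))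
    (hind : ∀ u ∈ S, ∀ v ∈ S, ¬ (pathGraph n).Adj u v)
    (hcard : S.card = (n+1)/2) :
    ∀ i : ℕ, i < (n+1)/2 → (S.filter (fun (v : Fin n) => (v:ℕ)/2 = i)).card = 1 := by
  classical
  set m := (n+1)/2 with hm
  have hf : ∀ v : Fin n, (v:ℕ)/2 < m := by
    intro v; have := v.isLt; omega
  have hsum : S.card = ∑ i : Fin m, (S.filter (fun (v : Fin n) => (⟨(v:ℕ)/2, hf v⟩ : Fin m) = i)).card :=
    Finset.card_eq_sum_card_fiberwise (fun v _ => Finset.mem_univ _)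
  have heq : ∀ i : Fin m, (S.filter (fun (v : Fin n) => (⟨(v:ℕ)/2, hf v⟩ : Fin m) = i)).card
      = (S.filter (fun (v : Fin n) => (v:ℕ)/2 = (i:ℕ))).card := by
    intro i; congr 1; apply Finset.filter_congr; intro v _; simp [Fin.ext_iff]
  have hle : ∀ i : Fin m, (S.filter (fun (v : Fin n) => (⟨(v:ℕ)/2, hf v⟩ : Fin m) = i)).card ≤ 1 := by
    intro i
    apply Finset.card_le_one.2
    intro u hu v hv
    simp only [Finset.mem_filter] at hu hv
    by_contra hne
    have e1 : (u:ℕ)/2 = (i:ℕ) := congrArg Fin.val hu.2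
    have e2 : (v:ℕ)/2 = (i:ℕ) := congrArg Fin.val hv.2
    have hne' : (u:ℕ) ≠ (v:ℕ) := fun h => hne (Fin.val_injective h)
    have : (u:ℕ)+1 = v ∨ (v:ℕ)+1 = u := by omega
    exact hind u hu.1 v hv.1 this
  have hall : ∀ i : Fin m, (S.filter (fun (v : Fin n) => (⟨(v:ℕ)/2, hf v⟩ : Fin m) = i)).card = 1 := by
    by_contra hc
    push_neg at hc
    obtain ⟨i, hi⟩ := hc
    have hlt : (S.filter (fun (v : Fin n) => (⟨(v:ℕ)/2, hf v⟩ : Fin m) = i)).card < 1 := by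
      have := hle i; omega
    have : (∑ j : Fin m, (S.filter (fun (v : Fin n) => (⟨(v:ℕ)/2, hf v⟩ : Fin m) = j)).card) < ∑ _j : Fin m, 1 :=
      Finset.sum_lt_sum (fun j _ => hle j) ⟨i, Finset.mem_univ i, hlt⟩
    simp only [Finset.sum_const, Finset.card_univ, Fintype.card_fin, smul_eq_mul, mul_one] at this
    omega
  intro i hi
  rw [← heq ⟨i, hi⟩]
  exact hall ⟨i, hi⟩


lemma fiber_subsingleton {n : ℕ} {S : Finset (Fin n)}
    (hind : ∀ u ∈ S, ∀ v ∈ S, ¬ (pathGraph n).Adj u v)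
    {u v : Fin n} (hu : u ∈ S) (hv : v ∈ S) (h : (u:ℕ)/2 = (v:ℕ)/2) : u = v := by
  by_contra hne
  have hne' : (u:ℕ) ≠ (v:ℕ) := fun h => hne (Fin.val_injective h)
  exact hind u hu v hv (show (u:ℕ)+1 = (v:ℕ) ∨ (v:ℕ)+1 = (u:ℕ) by omega)

lemma threshold {n : ℕ} (S : Finset (Fin n))
    (hind : ∀ u ∈ S, ∀ v ∈ S, ¬ (pathGraph n).Adj u v)
    (hcard : S.card = (n+1)/2) :
    ∃ j ≤ (n+1)/2, (n % 2 = 1 → j = (n+1)/2) ∧ ∀ v : Fin n, v ∈ S ↔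
      (((v:ℕ)%2 = 0 ∧ (v:ℕ)/2 < j) ∨ ((v:ℕ)%2 = 1 ∧ j ≤ (v:ℕ)/2)) := by
  classical
  set m := (n+1)/2 with hm
  -- each block has a unique element
  have hblock : ∀ i < m, ∃ v ∈ S, (v:ℕ)/2 = i ∧ ∀ w ∈ S, (w:ℕ)/2 = i → w = v := by
    intro i hi
    have h1 := block_card_one S hind hcard i hi
    obtain ⟨a, ha⟩ := Finset.card_eq_one.1 h1
    have hamem : a ∈ S.filter (fun (v : Fin n) => (v:ℕ)/2 = i) := by rw [ha]; exact Finset.mem_singleton_self a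
    simp only [Finset.mem_filter] at hamem
    refine ⟨a, hamem.1, hamem.2, ?_⟩
    intro w hw hwi
    have : w ∈ S.filter (fun (v : Fin n) => (v:ℕ)/2 = i) := Finset.mem_filter.2 ⟨hw, hwi⟩
    rw [ha] at this; exact Finset.mem_singleton.1 this
  set q : ℕ → Prop := fun i => ∃ h : 2*i+1 < n, (⟨2*i+1, h⟩ : Fin n) ∈ S with hq
  have hP : ∃ i, m ≤ i ∨ q i := ⟨m, Or.inl le_rfl⟩
  set j := Nat.find hP with hjdef
  have hj_le : j ≤ m := Nat.find_le (Or.inl le_rfl)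
  have hnotq : ∀ i < j, ¬ (m ≤ i ∨ q i) := fun i hi => Nat.find_min hP hi
  have h0 : ∀ i < j, ∀ (h : 2*i < n), (⟨2*i, h⟩ : Fin n) ∈ S := by
    intro i hij h
    have him : i < m := by
      rcases Nat.lt_or_ge i m with h'|h' 
      · exact h'
      · exact absurd (Or.inl h') (hnotq i hij)
    obtain ⟨v, hvS, hvi, hvuniq⟩ := hblock i him
    have hv2 : (v:ℕ) = 2*i ∨ (v:ℕ) = 2*i+1 := by omega
    rcases hv2 with hv2|hv2
    · have : (⟨2*i, h⟩ : Fin n) = v := Fin.ext (by simpa using hv2.symm)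
      rw [this]; exact hvS
    · exfalso
      apply hnotq i hij
      right
      refine ⟨by omega, ?_⟩
      have : (⟨2*i+1, by omega⟩ : Fin n) = v := Fin.ext (by simpa using hv2.symm)
      rw [this]; exact hvS
  have h1 : ∀ i, j ≤ i → i < m → q i := by
    intro i hji
    induction i, hji using Nat.le_induction with
    | base =>
      intro hjm
      rcases Nat.find_spec hP with h'|h'
      · omega
      · exact h'
    | succ i hji IH =>
      intro hi1
      obtain ⟨h2, hmem⟩ := IH (by omega)
      obtain ⟨v, hvS, hvi, hvuniq⟩ := hblock (i+1) hi1
      have hv2 : (v:ℕ) = 2*(i+1) ∨ (v:ℕ) = 2*(i+1)+1 := by omega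
      rcases hv2 with hv2|hv2
      · exfalso
        refine hind _ hmem v hvS ?_
        show (2*i+1 : ℕ)+1 = (v:ℕ) ∨ (v:ℕ)+1 = (2*i+1 : ℕ)
        omega
      · refine ⟨by omega, ?_⟩
        have : (⟨2*(i+1)+1, by omega⟩ : Fin n) = v := Fin.ext (by simpa using hv2.symm)
        rw [this]; exact hvS
  have hodd : n % 2 = 1 → j = m := by
    intro hn
    by_contra hne
    have hjm : j < m := lt_of_le_of_ne hj_le hne
    obtain ⟨h2, _⟩ := h1 (m-1) (by omega) (by omega)
    omega
  refine ⟨j, hj_le, hodd, ?_⟩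
  intro v
  constructor
  · intro hv
    have him : (v:ℕ)/2 < m := by have := v.isLt; omega
    rcases Nat.lt_or_ge ((v:ℕ)/2) j with hc|hc
    · left
      have h2n : 2*((v:ℕ)/2) < n := by have := v.isLt; omega
      have hmem := h0 _ hc h2n
      have := fiber_subsingleton hind hv hmem (by simp; try omega)
      have hval : (v:ℕ) = 2*((v:ℕ)/2) := by
        have := congrArg Fin.val this; simpa using this
      omega
    · right
      obtain ⟨h2, hmem⟩ := h1 _ hc him
      have := fiber_subsingleton hind hv hmem (by simp; try omega)
      have hval : (v:ℕ) = 2*((v:ℕ)/2)+1 := by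
        have := congrArg Fin.val this; simpa using this
      omega
  · rintro (⟨hpar, hlt⟩|⟨hpar, hle⟩)
    · have h2n : 2*((v:ℕ)/2) < n := by have := v.isLt; omega
      have hmem := h0 _ hlt h2n
      have : v = (⟨2*((v:ℕ)/2), h2n⟩ : Fin n) := Fin.ext (by simp; try omega)
      rw [this]; exact hmem
    · have him : (v:ℕ)/2 < m := by have := v.isLt; omega
      obtain ⟨h2, hmem⟩ := h1 _ hle him
      have : v = (⟨2*((v:ℕ)/2)+1, h2⟩ : Fin n) := Fin.ext (by simp; try omega)
      rw [this]; exact hmem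


abbrev Tset (n j : ℕ) : Finset (Fin n) :=
  Finset.univ.filter (fun (v : Fin n) =>
    ((v:ℕ)%2 = 0 ∧ (v:ℕ)/2 < j) ∨ ((v:ℕ)%2 = 1 ∧ j ≤ (v:ℕ)/2))

lemma Tset_indep (n j : ℕ) :
    ∀ u ∈ Tset n j, ∀ v ∈ Tset n j, ¬ (pathGraph n).Adj u v := by
  intro u hu v hv hadj
  simp only [Tset, Finset.mem_filter, Finset.mem_univ, true_and] at hu hv
  have : (u:ℕ)+1 = v ∨ (v:ℕ)+1 = u := hadj
  omega

lemma Tset_dom (n j : ℕ) (hj : j ≤ (n+1)/2)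
    (hcase : n % 2 = 0 ∨ (n % 2 = 1 ∧ j = (n+1)/2)) :
    ∀ v : Fin n, v ∈ Tset n j ∨ ∃ u ∈ Tset n j, (pathGraph n).Adj u v := by
  intro v
  by_cases hmem : v ∈ Tset n j
  · exact Or.inl hmem
  · right
    simp only [Tset, Finset.mem_filter, Finset.mem_univ, true_and] at hmem
    push_neg at hmem
    obtain ⟨hm1, hm2⟩ := hmem
    rcases Nat.even_or_odd (v:ℕ) with he|ho
    · -- v even, j ≤ v/2
      have hpar : (v:ℕ) % 2 = 0 := Nat.even_iff.1 he
      have hge : j ≤ (v:ℕ)/2 := by have := hm1 hpar; omega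
      have hlt : (v:ℕ)+1 < n := by
        by_contra hno
        have hv1 : (v:ℕ) = n - 1 := by have := v.isLt; omega
        rcases hcase with h|⟨h, hjm⟩ <;> omega
      refine ⟨⟨(v:ℕ)+1, hlt⟩, ?_, ?_⟩
      · simp only [Tset, Finset.mem_filter, Finset.mem_univ, true_and]
        right; constructor <;> omega
      · show ((v:ℕ)+1 : ℕ)+1 = (v:ℕ) ∨ (v:ℕ)+1 = ((v:ℕ)+1 : ℕ)
        simp
    · -- v odd, v/2 < j
      have hpar : (v:ℕ) % 2 = 1 := Nat.odd_iff.1 ho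
      have hlt : (v:ℕ)/2 < j := by have := hm2 hpar; omega
      have hpos : 1 ≤ (v:ℕ) := by omega
      refine ⟨⟨(v:ℕ)-1, by have := v.isLt; omega⟩, ?_, ?_⟩
      · simp only [Tset, Finset.mem_filter, Finset.mem_univ, true_and]
        left; constructor <;> omega
      · show ((v:ℕ)-1 : ℕ)+1 = (v:ℕ) ∨ (v:ℕ)+1 = ((v:ℕ)-1 : ℕ)
        omega

lemma Tset_card (n j : ℕ) (hj : j ≤ (n+1)/2)
    (h2 : ∀ i, j ≤ i → i < (n+1)/2 → 2*i+1 < n) :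
    (Tset n j).card = (n+1)/2 := by
  classical
  have := Finset.card_bij
    (fun (v : Fin n) (hv : v ∈ Tset n j) => (⟨(v:ℕ)/2, by have := v.isLt; omega⟩ : Fin ((n+1)/2)))
    (fun v hv => Finset.mem_univ _)
    (by
      intro a ha b hb hab
      simp only [Tset, Finset.mem_filter, Finset.mem_univ, true_and] at ha hb
      have h : (a:ℕ)/2 = (b:ℕ)/2 := congrArg Fin.val hab
      apply Fin.val_injective
      omega)
    (by
      intro b _
      rcases Nat.lt_or_ge (b:ℕ) j with hb|hb
      · have hbn : 2*(b:ℕ) < n := by have := b.isLt; omega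
        refine ⟨⟨2*(b:ℕ), hbn⟩, ?_, ?_⟩
        · simp only [Tset, Finset.mem_filter, Finset.mem_univ, true_and]
          left; constructor <;> omega
        · apply Fin.val_injective
          simp only [Fin.val_mk]
          omega
      · have hbn : 2*(b:ℕ)+1 < n := h2 _ hb b.isLt
        refine ⟨⟨2*(b:ℕ)+1, hbn⟩, ?_, ?_⟩
        · simp only [Tset, Finset.mem_filter, Finset.mem_univ, true_and]
          right; constructor <;> omega
        · apply Fin.val_injective
          simp only [Fin.val_mk]
          omega)
  simpa using this

/- Recall vertex `v : Fin n` carries the label `v + 1 ∈ {1, ..., n}`. -/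
theorem max_indep_dom_sets_characterization :
    (∀ n : ℕ, n % 2 = 1 → ∀ S : Finset (Fin n),
      (IsIndepDomSet n S ∧ S.card = (n + 1) / 2) ↔
        S = Finset.univ.filter (fun v : Fin n => ((v : ℕ) + 1) % 2 = 1)) ∧
    (∀ n : ℕ, n % 2 = 0 → 2 ≤ n → ∀ S : Finset (Fin n),
      (IsIndepDomSet n S ∧ S.card = n / 2) ↔
        (S = Finset.univ.filter (fun v : Fin n => ((v : ℕ) + 1) % 2 = 0) ∨
         S = Finset.univ.filter (fun v : Fin n => ((v : ℕ) + 1) % 2 = 1) ∨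
         ∃ j : ℕ, 1 ≤ j ∧ j ≤ n / 2 - 1 ∧
           S = Finset.univ.filter (fun v : Fin n =>
             ((v : ℕ) + 1 ≤ 2 * j - 1 ∧ ((v : ℕ) + 1) % 2 = 1) ∨
             (2 * j + 2 ≤ (v : ℕ) + 1 ∧ ((v : ℕ) + 1) % 2 = 0)))) := by

  constructor
  · -- odd case
    intro n hn S
    constructor
    · rintro ⟨⟨hind, hdom⟩, hcard⟩
      obtain ⟨j, hj, hodd, hmem⟩ := threshold S hind hcard
      have hj' := hodd hn
      ext v
      simp only [Finset.mem_filter, Finset.mem_univ, true_and]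
      rw [hmem v]
      have := v.isLt
      omega
    · intro hSeq
      have hT : S = Tset n ((n+1)/2) := by
        rw [hSeq]; ext v
        simp only [Tset, Finset.mem_filter, Finset.mem_univ, true_and]
        have := v.isLt; omega
      rw [hT]
      refine ⟨⟨Tset_indep _ _, Tset_dom _ _ le_rfl (Or.inr ⟨hn, rfl⟩)⟩, ?_⟩
      exact Tset_card n ((n+1)/2) le_rfl (by intro i h1 h2; omega)
  · -- even case
    intro n hn hn2 S
    constructor
    · rintro ⟨⟨hind, hdom⟩, hcard⟩
      obtain ⟨j, hj, -, hmem⟩ := threshold S hind (by omega)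
      by_cases hj0 : j = 0
      · left; ext v
        simp only [Finset.mem_filter, Finset.mem_univ, true_and]
        rw [hmem v]; have := v.isLt; omega
      · by_cases hjm : j = n/2
        · right; left; ext v
          simp only [Finset.mem_filter, Finset.mem_univ, true_and]
          rw [hmem v]; have := v.isLt; omega
        · right; right
          refine ⟨j, by omega, by omega, ?_⟩
          ext v
          simp only [Finset.mem_filter, Finset.mem_univ, true_and]
          rw [hmem v]; have := v.isLt; omega
    · intro h
      have key : ∀ j ≤ n/2, S = Tset n j →
          (IsIndepDomSet n S ∧ S.card = n / 2) := by
        intro j hjle hT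
        rw [hT]
        refine ⟨⟨Tset_indep _ _, Tset_dom _ _ (by omega) (Or.inl hn)⟩, ?_⟩
        rw [Tset_card n j (by omega) (by intro i h1 h2; omega)]
        omega
      rcases h with h|h|⟨j, hj1, hj2, h⟩
      · refine key 0 (by omega) ?_
        rw [h]; ext v
        simp only [Tset, Finset.mem_filter, Finset.mem_univ, true_and]
        have := v.isLt; omega
      · refine key (n/2) le_rfl ?_
        rw [h]; ext v
        simp only [Tset, Finset.mem_filter, Finset.mem_univ, true_and]
        have := v.isLt; omega
      · refine key j (by omega) ?_
        rw [h]; ext v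
        simp only [Tset, Finset.mem_filter, Finset.mem_univ, true_and]
        have := v.isLt; omega
end
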